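/- arXiv:2301.04641 — 3 statements merged into one kernel-verified Lean document; each statement's English description precedes it below -/
import Mathlib

section
/- There exist absolute constants c1, c2 > 0 such that the following holds. Let y, ỹ ∈ ℝ^M be random vectors and let (y_1, ỹ_1),…,(y_N, ỹ_N) be i.i.d. copies of (y, ỹ). Let λ > 0 and let τ_1,…,τ_N, τ̃_1,…,τ̃_N ∈ ℝ^M be dithering vectors, independent of each other and of the samples, each with i.i.d. coordinates uniform on [−λ, λ]. Define r_k = sign(y_k + τ_k) and r̃_k = sign(ỹ_k + τ̃_k). If N ≥ c1·log(M), then for every t ≥ 0, with probability at least 1 − 2e^{−c2 N t}, ‖(λ²/N)·Σ_{k=1}^N (r_k r̃_k^T − E[r r̃^T])‖_∞ < √(λ⁴·(c1·log(M)/N + t)), where the expectation E[r r̃^T] is over one sample and its dithers. -/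
open MeasureTheory ProbabilityTheory Matrix
open scoped ComplexOrder

noncomputable section

/-- Entrywise maximum-modulus norm of a complex matrix. -/
def maxNorm {M : ℕ} (A : Matrix (Fin M) (Fin M) ℂ) : ℝ :=
  ⨆ i, ⨆ j, ‖A i j‖

/-- Frobenius norm of a complex matrix. -/
def frobNorm {M : ℕ} (A : Matrix (Fin M) (Fin M) ℂ) : ℝ :=
  Real.sqrt (∑ i, ∑ j, ‖A i j‖ ^ 2)

/-- Spectral (operator) norm of a complex matrix. -/
def specNorm {M : ℕ} (A : Matrix (Fin M) (Fin M) ℂ) : ℝ :=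
  ‖Matrix.toEuclideanCLM (𝕜 := ℂ) (n := Fin M) A‖

/-- diag(C)^{-1/2}: the diagonal matrix with entries [C]_{ii}^{-1/2}. -/
def dInvSqrt {M : ℕ} (C : Matrix (Fin M) (Fin M) ℂ) : Matrix (Fin M) (Fin M) ℂ :=
  Matrix.diagonal fun i => ((Real.sqrt (C i i).re)⁻¹ : ℂ)

/-- Bussgang gain A = sqrt(2/π)·diag(C)^{-1/2}. -/
def busA {M : ℕ} (C : Matrix (Fin M) (Fin M) ℂ) : Matrix (Fin M) (Fin M) ℂ :=
  (Real.sqrt (2 / Real.pi) : ℂ) • dInvSqrt C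

/-- The arcsine-law map P_arcsine(C) = (2/π)[arcsin(D^{-1/2} Re(C) D^{-1/2}) + i·arcsin(D^{-1/2} Im(C) D^{-1/2})]. -/
def arcsineMap {M : ℕ} (C : Matrix (Fin M) (Fin M) ℂ) : Matrix (Fin M) (Fin M) ℂ :=
  Matrix.of fun i j =>
    ((2 / Real.pi : ℝ) : ℂ) *
      ((Real.arcsin ((C i j).re / (Real.sqrt (C i i).re * Real.sqrt (C j j).re)) : ℝ) +
        Complex.I *
          ((Real.arcsin ((C i j).im / (Real.sqrt (C i i).re * Real.sqrt (C j j).re)) : ℝ) : ℂ))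

/-- one-bit sign quantizer: sign(x) = 1 if x ≥ 0, else -1. -/
def rsign (x : ℝ) : ℝ := if 0 ≤ x then 1 else -1

/-- one-bit complex quantization with dithers: sign(Re(y)+τ^R) + i·sign(Im(y)+τ^I). -/
def quant {M : ℕ} (yv : Fin M → ℂ) (tR tI : Fin M → ℝ) : Fin M → ℂ :=
  fun i => (rsign ((yv i).re + tR i) : ℂ) + Complex.I * (rsign ((yv i).im + tI i) : ℂ)

/-- dithered covariance estimator Ĉ = ½ C̃ + ½ C̃ᴴ with C̃ = (λ²/N) Σ r_n r̃_nᴴ. -/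
def ditherEst {M N : ℕ} (lam : ℝ) (r rt : Fin N → Fin M → ℂ) : Matrix (Fin M) (Fin M) ℂ :=
  ((1 : ℂ)/2) • (Matrix.of (fun i j => ((lam ^ 2 / N : ℝ) : ℂ) * ∑ n, r n i * (starRingEnd ℂ) (rt n j))
    + (Matrix.of (fun i j => ((lam ^ 2 / N : ℝ) : ℂ) * ∑ n, r n i * (starRingEnd ℂ) (rt n j)))ᴴ)

/-- the uniform probability measure on [-λ, λ]. -/
def unifIcc (lam : ℝ) : Measure ℝ :=
  (ENNReal.ofReal (2 * lam))⁻¹ • (volume.restrict (Set.Icc (-lam) lam))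

/-- S-subgaussian coordinates: (E|Re(y)_j|^p)^{1/p}, (E|Im(y)_j|^p)^{1/p} ≤ S √p ‖C_y‖_∞^{1/2} for p ≥ 2. -/
def SubgaussianCoords {Ω : Type} [MeasureSpace Ω] {M : ℕ} (S : ℝ)
    (y : Ω → Fin M → ℂ) (Cy : Matrix (Fin M) (Fin M) ℂ) : Prop :=
  ∀ (p : ℝ), 2 ≤ p → ∀ j : Fin M,
    (∫ ω, |(y ω j).re| ^ p) ^ (1/p) ≤ S * Real.sqrt p * Real.sqrt (maxNorm Cy) ∧
    (∫ ω, |(y ω j).im| ^ p) ^ (1/p) ≤ S * Real.sqrt p * Real.sqrt (maxNorm Cy)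

/-- Entrywise maximum-absolute-value norm of a real matrix. -/
def maxNormR {M : ℕ} (A : Matrix (Fin M) (Fin M) ℝ) : ℝ :=
  ⨆ i, ⨆ j, |A i j|

/-- real one-bit quantization with dither: sign(y + τ), entrywise. -/
def quantR {M : ℕ} (yv t : Fin M → ℝ) : Fin M → ℝ := fun i => rsign (yv i + t i)

/-- Index type for the joint family of N pairs of real samples and their 2·M·N real dither
coordinates. -/
def famTypeR (N M : ℕ) : Fin N ⊕ (Fin N × Fin 2 × Fin M) → Type
  | .inl _ => (Fin M → ℝ) × (Fin M → ℝ)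
  | .inr _ => ℝ

instance famMSR (N M : ℕ) : ∀ idx, MeasurableSpace (famTypeR N M idx)
  | .inl _ => inferInstanceAs (MeasurableSpace ((Fin M → ℝ) × (Fin M → ℝ)))
  | .inr _ => inferInstanceAs (MeasurableSpace ℝ)

/-- The family of the N sample pairs and all of their dither coordinates. -/
def famFunR {Ω : Type} {N M : ℕ} (Y Yt : Fin N → Ω → Fin M → ℝ)
    (d : Fin N → Fin 2 → Ω → Fin M → ℝ) : ∀ idx, Ω → famTypeR N M idx
  | .inl n => fun ω => (Y n ω, Yt n ω)
  | .inr (n, k, m) => fun ω => d n k ω m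

/-- Index type for one generic pair of real random vectors and its 2·M dither coordinates. -/
def famTypeR1 (M : ℕ) : Unit ⊕ (Fin 2 × Fin M) → Type
  | .inl _ => (Fin M → ℝ) × (Fin M → ℝ)
  | .inr _ => ℝ

instance famMSR1 (M : ℕ) : ∀ idx, MeasurableSpace (famTypeR1 M idx)
  | .inl _ => inferInstanceAs (MeasurableSpace ((Fin M → ℝ) × (Fin M → ℝ)))
  | .inr _ => inferInstanceAs (MeasurableSpace ℝ)

/-- The family consisting of the generic pair (y, ỹ) and its dither coordinates. -/
def famFunR1 {Ω : Type} {M : ℕ} (y yt : Ω → Fin M → ℝ)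
    (g : Fin 2 → Ω → Fin M → ℝ) : ∀ idx, Ω → famTypeR1 M idx
  | .inl _ => fun ω => (y ω, yt ω)
  | .inr (k, m) => fun ω => g k ω m

-- ===== auxiliary lemmas =====
lemma measurable_rsign : Measurable rsign :=
  Measurable.ite (measurableSet_le measurable_const measurable_id) measurable_const measurable_const

lemma abs_rsign (x : ℝ) : |rsign x| = 1 := by
  unfold rsign; split <;> simp

lemma integrable_of_bound {Ω : Type} [MeasureSpace Ω] [IsProbabilityMeasure (ℙ : Measure Ω)]
    {f : Ω → ℝ} (hm : Measurable f) (C : ℝ) (h : ∀ ω, |f ω| ≤ C) : Integrable f ℙ :=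
  (integrable_const C).mono' hm.aestronglyMeasurable (Filter.Eventually.of_forall h)

lemma exp_le_quad {u : ℝ} (hu : |u| ≤ 1) : Real.exp u ≤ 1 + u + (3/4) * u^2 := by
  have h := Real.exp_bound hu (n := 2) (by norm_num)
  have h2 : ∑ m ∈ Finset.range 2, u ^ m / m.factorial = 1 + u := by
    simp [Finset.sum_range_succ]
  have h3 : (|u| : ℝ) ^ 2 * ((Nat.succ 2) / ((Nat.factorial 2 : ℕ) * (2:ℕ))) = (3/4) * u^2 := by
    rw [sq_abs]; norm_num [Nat.factorial]; ring
  rw [h2, h3] at h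
  linarith [(abs_le.mp h).2]

lemma mgf_single {Ω : Type} [MeasureSpace Ω] [IsProbabilityMeasure (ℙ : Measure Ω)]
    {X : Ω → ℝ} (hm : Measurable X) (hb : ∀ ω, |X ω| ≤ 2) (h0 : ∫ ω, X ω = 0)
    {c : ℝ} (hc : |c| ≤ 1/2) : ∫ ω, Real.exp (c * X ω) ≤ Real.exp (3 * c^2) := by
  have hpt : ∀ ω, Real.exp (c * X ω) ≤ 1 + c * X ω + (3/4) * (c * X ω)^2 := by
    intro ω
    apply exp_le_quad
    rw [abs_mul]
    calc |c| * |X ω| ≤ (1/2) * 2 := by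
          apply mul_le_mul hc (hb ω) (abs_nonneg _) (by norm_num)
      _ = 1 := by norm_num
  have hX2 : ∀ ω, (3/4) * (c * X ω)^2 ≤ 3 * c^2 := by
    intro ω
    have : (X ω)^2 ≤ 4 := by nlinarith [abs_le.mp (hb ω), sq_abs (X ω)]
    nlinarith [sq_nonneg c]
  have hint1 : Integrable X ℙ := integrable_of_bound hm 2 hb
  have hintq : Integrable (fun ω => 1 + c * X ω + 3 * c^2) ℙ := by
    apply ((hint1.const_mul c).add (integrable_const (1 + 3*c^2))).congr
    exact Filter.Eventually.of_forall fun ω => by simp; ring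
  calc ∫ ω, Real.exp (c * X ω) ≤ ∫ ω, (1 + c * X ω + 3 * c^2) := by
        apply integral_mono_of_nonneg (Filter.Eventually.of_forall fun ω => (Real.exp_pos _).le)
          hintq (Filter.Eventually.of_forall fun ω => le_trans (hpt ω) (by nlinarith [hX2 ω]))
    _ = c * (∫ ω, X ω) + (1 + 3 * c^2) := by
        have : ∀ ω, 1 + c * X ω + 3 * c^2 = c * X ω + (1 + 3 * c^2) := fun ω => by ring
        simp_rw [this]
        rw [integral_add (hint1.const_mul c) (integrable_const _), integral_const_mul,
          integral_const]
        simp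
    _ = 1 + 3 * c^2 := by rw [h0]; ring
    _ ≤ Real.exp (3 * c^2) := by
        have := Real.add_one_le_exp (3 * c^2); linarith

def keyOf {N M : ℕ} : (Fin N ⊕ (Fin N × Fin 2 × Fin M)) → Fin N := Sum.elim id (fun p => p.1)

def blk {N M : ℕ} (T : Finset (Fin N)) : Finset (Fin N ⊕ (Fin N × Fin 2 × Fin M)) :=
  Finset.univ.filter (fun idx => keyOf idx ∈ T)

lemma mem_blk_inl {N M : ℕ} {T : Finset (Fin N)} {n : Fin N} (h : n ∈ T) :
    (Sum.inl n : Fin N ⊕ (Fin N × Fin 2 × Fin M)) ∈ blk T := by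
  exact Finset.mem_filter.mpr ⟨Finset.mem_univ _, h⟩

lemma mem_blk_inr {N M : ℕ} {T : Finset (Fin N)} {n : Fin N} (k : Fin 2) (m : Fin M) (h : n ∈ T) :
    (Sum.inr (n, k, m) : Fin N ⊕ (Fin N × Fin 2 × Fin M)) ∈ blk T := by
  exact Finset.mem_filter.mpr ⟨Finset.mem_univ _, h⟩

lemma blk_disjoint {N M : ℕ} {T T' : Finset (Fin N)} (h : Disjoint T T') :
    Disjoint (blk (M := M) T) (blk T') := by
  rw [Finset.disjoint_left]
  intro a ha hb
  simp only [blk, Finset.mem_filter] at ha hb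
  exact Finset.disjoint_left.mp h ha.2 hb.2

def extQ {N M : ℕ} (i j : Fin M) (S : Finset (Fin N ⊕ (Fin N × Fin 2 × Fin M))) (n : Fin N)
    (h1 : Sum.inl n ∈ S) (h2 : Sum.inr (n, 0, i) ∈ S) (h3 : Sum.inr (n, 1, j) ∈ S)
    (x : ∀ s : S, famTypeR N M s) : ℝ :=
  rsign ((x ⟨Sum.inl n, h1⟩).1 i + (show ℝ from x ⟨Sum.inr (n, 0, i), h2⟩)) *
    rsign ((x ⟨Sum.inl n, h1⟩).2 j + (show ℝ from x ⟨Sum.inr (n, 1, j), h3⟩))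

lemma measurable_extQ {N M : ℕ} (i j : Fin M) (S : Finset (Fin N ⊕ (Fin N × Fin 2 × Fin M)))
    (n : Fin N) (h1 : Sum.inl n ∈ S) (h2 : Sum.inr (n, 0, i) ∈ S) (h3 : Sum.inr (n, 1, j) ∈ S) :
    Measurable (extQ i j S n h1 h2 h3) := by
  unfold extQ
  have e1 : Measurable fun x : ∀ s : S, famTypeR N M s => x ⟨Sum.inl n, h1⟩ :=
    measurable_pi_apply _
  have e2 : Measurable fun x : ∀ s : S, famTypeR N M s => x ⟨Sum.inr (n, 0, i), h2⟩ :=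
    measurable_pi_apply _
  have e3 : Measurable fun x : ∀ s : S, famTypeR N M s => x ⟨Sum.inr (n, 1, j), h3⟩ :=
    measurable_pi_apply _
  have p1 : Measurable fun p : (Fin M → ℝ) × (Fin M → ℝ) => p.1 i :=
    (measurable_pi_apply i).comp measurable_fst
  have p2 : Measurable fun p : (Fin M → ℝ) × (Fin M → ℝ) => p.2 j :=
    (measurable_pi_apply j).comp measurable_snd
  exact ((measurable_rsign.comp ((p1.comp e1).add e2)).mul
    (measurable_rsign.comp ((p2.comp e1).add e3)))

lemma indep_exp_prod {Ω : Type} [MeasureSpace Ω] {N M : ℕ}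
    {Y Yt : Fin N → Ω → Fin M → ℝ} {d : Fin N → Fin 2 → Ω → Fin M → ℝ}
    (hfmeas : ∀ idx, Measurable (famFunR Y Yt d idx))
    (hIndep : iIndepFun (m := famMSR N M) (famFunR Y Yt d) ℙ)
    (i j : Fin M) (F : ℝ → ℝ) (hF : Measurable F)
    (T : Finset (Fin N)) (k : Fin N) (hk : k ∉ T) :
    IndepFun (fun ω => F (rsign (Y k ω i + d k 0 ω i) * rsign (Yt k ω j + d k 1 ω j)))
      (fun ω => ∏ n ∈ T, F (rsign (Y n ω i + d n 0 ω i) * rsign (Yt n ω j + d n 1 ω j))) ℙ := by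
  have hdisj : Disjoint (blk (M := M) {k}) (blk T) :=
    blk_disjoint (Finset.disjoint_singleton_left.mpr hk)
  have hm1 : (Sum.inl k : Fin N ⊕ (Fin N × Fin 2 × Fin M)) ∈ blk {k} :=
    mem_blk_inl (Finset.mem_singleton_self k)
  have hm2 := mem_blk_inr (M := M) (T := {k}) (0 : Fin 2) i (Finset.mem_singleton_self k)
  have hm3 := mem_blk_inr (M := M) (T := {k}) (1 : Fin 2) j (Finset.mem_singleton_self k)
  have hΦ1 : Measurable (fun x : ∀ s : (blk (M := M) {k} : Finset _), famTypeR N M s =>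
      F (extQ i j _ k hm1 hm2 hm3 x)) := hF.comp (measurable_extQ i j _ k hm1 hm2 hm3)
  have hΦT : Measurable (fun x : ∀ s : (blk (M := M) T : Finset _), famTypeR N M s =>
      ∏ n ∈ T.attach, F (extQ i j _ n.1 (mem_blk_inl n.2) (mem_blk_inr 0 i n.2)
        (mem_blk_inr 1 j n.2) x)) :=
    Finset.measurable_prod _ fun n _ => hF.comp (measurable_extQ i j _ _ _ _ _)
  have key := (hIndep.indepFun_finset (blk {k}) (blk T) hdisj hfmeas).comp hΦ1 hΦT
  have e2 : ((fun x : ∀ s : (blk (M := M) T : Finset _), famTypeR N M s =>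
        ∏ n ∈ T.attach, F (extQ i j _ n.1 (mem_blk_inl n.2) (mem_blk_inr 0 i n.2)
          (mem_blk_inr 1 j n.2) x)) ∘ (fun a (s : (blk (M := M) T : Finset _)) =>
            famFunR Y Yt d s a))
      = fun ω => ∏ n ∈ T, F (rsign (Y n ω i + d n 0 ω i) * rsign (Yt n ω j + d n 1 ω j)) :=
    funext fun ω => Finset.prod_attach T
      (fun n => F (rsign (Y n ω i + d n 0 ω i) * rsign (Yt n ω j + d n 1 ω j)))
  rw [e2] at key
  exact key

lemma map_triple {Ω : Type} [MeasureSpace Ω] [IsProbabilityMeasure (ℙ : Measure Ω)] {N M : ℕ}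
    {Y Yt : Fin N → Ω → Fin M → ℝ} {d : Fin N → Fin 2 → Ω → Fin M → ℝ}
    (hfmeas : ∀ idx, Measurable (famFunR Y Yt d idx))
    (hIndep : iIndepFun (m := famMSR N M) (famFunR Y Yt d) ℙ) (k : Fin N) (i j : Fin M) :
    Measure.map (fun ω => ((Y k ω, Yt k ω), (d k 0 ω i, d k 1 ω j))) ℙ
      = (Measure.map (fun ω => (Y k ω, Yt k ω)) ℙ).prod
        ((Measure.map (fun ω => d k 0 ω i) ℙ).prod (Measure.map (fun ω => d k 1 ω j) ℙ)) := by
  have hP : Measurable fun ω => (Y k ω, Yt k ω) := hfmeas (Sum.inl k)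
  have hU : Measurable fun ω => d k 0 ω i := hfmeas (Sum.inr (k, 0, i))
  have hV : Measurable fun ω => d k 1 ω j := hfmeas (Sum.inr (k, 1, j))
  have hD : Measurable fun ω => (d k 0 ω i, d k 1 ω j) := hU.prodMk hV
  have hUV : IndepFun (fun ω => d k 0 ω i) (fun ω => d k 1 ω j) ℙ :=
    hIndep.indepFun (i := Sum.inr (k, 0, i)) (j := Sum.inr (k, 1, j)) (by simp)
  have hPD : IndepFun (fun ω => (Y k ω, Yt k ω)) (fun ω => (d k 0 ω i, d k 1 ω j)) ℙ := by
    have hdisj : Disjoint ({Sum.inl k} : Finset (Fin N ⊕ (Fin N × Fin 2 × Fin M)))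
        {Sum.inr (k, 0, i), Sum.inr (k, 1, j)} := by
      simp [Finset.disjoint_left]
    have base := hIndep.indepFun_finset _ _ hdisj hfmeas
    have hm1 : (Sum.inl k : Fin N ⊕ (Fin N × Fin 2 × Fin M))
        ∈ ({Sum.inl k} : Finset (Fin N ⊕ (Fin N × Fin 2 × Fin M))) := Finset.mem_singleton_self _
    have hm2 : (Sum.inr (k, 0, i) : Fin N ⊕ (Fin N × Fin 2 × Fin M))
        ∈ ({Sum.inr (k, 0, i), Sum.inr (k, 1, j)} : Finset _) := by simp
    have hm3 : (Sum.inr (k, 1, j) : Fin N ⊕ (Fin N × Fin 2 × Fin M))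
        ∈ ({Sum.inr (k, 0, i), Sum.inr (k, 1, j)} : Finset _) := by simp
    have hφ : Measurable fun x : ∀ s : ({Sum.inl k} : Finset (Fin N ⊕ (Fin N × Fin 2 × Fin M))),
        famTypeR N M s => (show (Fin M → ℝ) × (Fin M → ℝ) from x ⟨Sum.inl k, hm1⟩) :=
      measurable_pi_apply _
    have hψ : Measurable fun x : ∀ s : ({Sum.inr (k, 0, i), Sum.inr (k, 1, j)} :
        Finset (Fin N ⊕ (Fin N × Fin 2 × Fin M))), famTypeR N M s =>
        ((show ℝ from x ⟨Sum.inr (k, 0, i), hm2⟩), (show ℝ from x ⟨Sum.inr (k, 1, j), hm3⟩)) :=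
      Measurable.prodMk (measurable_pi_apply _) (measurable_pi_apply _)
    exact base.comp hφ hψ
  rw [(indepFun_iff_map_prod_eq_prod_map_map hP.aemeasurable hD.aemeasurable).mp hPD,
    (indepFun_iff_map_prod_eq_prod_map_map hU.aemeasurable hV.aemeasurable).mp hUV]

lemma map_triple1 {Ω : Type} [MeasureSpace Ω] [IsProbabilityMeasure (ℙ : Measure Ω)] {M : ℕ}
    {y yt : Ω → Fin M → ℝ} {g : Fin 2 → Ω → Fin M → ℝ}
    (hfmeas : ∀ idx, Measurable (famFunR1 y yt g idx))
    (hIndep : iIndepFun (m := famMSR1 M) (famFunR1 y yt g) ℙ) (i j : Fin M) :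
    Measure.map (fun ω => ((y ω, yt ω), (g 0 ω i, g 1 ω j))) ℙ
      = (Measure.map (fun ω => (y ω, yt ω)) ℙ).prod
        ((Measure.map (fun ω => g 0 ω i) ℙ).prod (Measure.map (fun ω => g 1 ω j) ℙ)) := by
  have hP : Measurable fun ω => (y ω, yt ω) := hfmeas (Sum.inl ())
  have hU : Measurable fun ω => g 0 ω i := hfmeas (Sum.inr (0, i))
  have hV : Measurable fun ω => g 1 ω j := hfmeas (Sum.inr (1, j))
  have hD : Measurable fun ω => (g 0 ω i, g 1 ω j) := hU.prodMk hV
  have hUV : IndepFun (fun ω => g 0 ω i) (fun ω => g 1 ω j) ℙ :=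
    hIndep.indepFun (i := Sum.inr ((0 : Fin 2), i)) (j := Sum.inr ((1 : Fin 2), j)) (by simp)
  have hPD : IndepFun (fun ω => (y ω, yt ω)) (fun ω => (g 0 ω i, g 1 ω j)) ℙ := by
    have hdisj : Disjoint ({Sum.inl ()} : Finset (Unit ⊕ (Fin 2 × Fin M)))
        {Sum.inr (0, i), Sum.inr (1, j)} := by
      simp [Finset.disjoint_left]
    have base := hIndep.indepFun_finset _ _ hdisj hfmeas
    have hm1 : (Sum.inl () : Unit ⊕ (Fin 2 × Fin M))
        ∈ ({Sum.inl ()} : Finset (Unit ⊕ (Fin 2 × Fin M))) := Finset.mem_singleton_self _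
    have hm2 : (Sum.inr ((0 : Fin 2), i) : Unit ⊕ (Fin 2 × Fin M))
        ∈ ({Sum.inr (0, i), Sum.inr (1, j)} : Finset _) := by simp
    have hm3 : (Sum.inr ((1 : Fin 2), j) : Unit ⊕ (Fin 2 × Fin M))
        ∈ ({Sum.inr (0, i), Sum.inr (1, j)} : Finset _) := by simp
    have hφ : Measurable fun x : ∀ s : ({Sum.inl ()} : Finset (Unit ⊕ (Fin 2 × Fin M))),
        famTypeR1 M s => (show (Fin M → ℝ) × (Fin M → ℝ) from x ⟨Sum.inl (), hm1⟩) :=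
      measurable_pi_apply _
    have hψ : Measurable fun x : ∀ s : ({Sum.inr (0, i), Sum.inr (1, j)} :
        Finset (Unit ⊕ (Fin 2 × Fin M))), famTypeR1 M s =>
        ((show ℝ from x ⟨Sum.inr (0, i), hm2⟩), (show ℝ from x ⟨Sum.inr (1, j), hm3⟩)) :=
      Measurable.prodMk (measurable_pi_apply _) (measurable_pi_apply _)
    exact base.comp hφ hψ
  rw [(indepFun_iff_map_prod_eq_prod_map_map hP.aemeasurable hD.aemeasurable).mp hPD,
    (indepFun_iff_map_prod_eq_prod_map_map hU.aemeasurable hV.aemeasurable).mp hUV]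

lemma maxNormR_lt {M : ℕ} (hM : 0 < M) (f : Fin M → Fin M → ℝ) {c : ℝ}
    (h : ∀ i j, |f i j| < c) : maxNormR (Matrix.of f) < c := by
  have hne : Nonempty (Fin M) := ⟨⟨0, hM⟩⟩
  have h1 : maxNormR (Matrix.of f) ≤ Finset.univ.sup' Finset.univ_nonempty
      (fun i => Finset.univ.sup' Finset.univ_nonempty (fun j => |f i j|)) :=
    ciSup_le fun i => le_trans
      (ciSup_le fun j => Finset.le_sup' (fun j => |f i j|) (Finset.mem_univ j))
      (Finset.le_sup' (fun i => Finset.univ.sup' Finset.univ_nonempty fun j => |f i j|)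
        (Finset.mem_univ i))
  refine lt_of_le_of_lt h1 ?_
  rw [Finset.sup'_lt_iff]
  intro i _
  rw [Finset.sup'_lt_iff]
  intro j _
  exact h i j

def Zf {Ω : Type} {N M : ℕ} (Y Yt : Fin N → Ω → Fin M → ℝ) (d : Fin N → Fin 2 → Ω → Fin M → ℝ)
    (i j : Fin M) (k : Fin N) (ω : Ω) : ℝ :=
  rsign (Y k ω i + d k 0 ω i) * rsign (Yt k ω j + d k 1 ω j)

def mf {Ω : Type} [MeasureSpace Ω] {M : ℕ} (y yt : Ω → Fin M → ℝ) (g : Fin 2 → Ω → Fin M → ℝ)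
    (i j : Fin M) : ℝ :=
  ∫ ω', rsign (y ω' i + g 0 ω' i) * rsign (yt ω' j + g 1 ω' j)

section Main
variable {Ω : Type} [MeasureSpace Ω] [IsProbabilityMeasure (ℙ : Measure Ω)] {N M : ℕ}
  {y yt : Ω → Fin M → ℝ} {Y Yt : Fin N → Ω → Fin M → ℝ}
  {d : Fin N → Fin 2 → Ω → Fin M → ℝ} {g : Fin 2 → Ω → Fin M → ℝ}

lemma mean_Zf (hy : Measurable y) (hyt : Measurable yt)
    (hfmeas : ∀ idx, Measurable (famFunR Y Yt d idx))
    (hfmeas1 : ∀ idx, Measurable (famFunR1 y yt g idx))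
    (hIndep : iIndepFun (m := famMSR N M) (famFunR Y Yt d) ℙ)
    (hIndep1 : iIndepFun (m := famMSR1 M) (famFunR1 y yt g) ℙ)
    (hcopy : ∀ n, Measure.map (fun ω => (Y n ω, Yt n ω)) ℙ
      = Measure.map (fun ω => (y ω, yt ω)) ℙ)
    (hdunif : ∀ n k m, Measure.map (fun ω => d n k ω m) ℙ = unifIcc lam)
    (hgunif : ∀ k m, Measure.map (fun ω => g k ω m) ℙ = unifIcc lam)
    (i j : Fin M) (k : Fin N) :
    ∫ ω, Zf Y Yt d i j k ω = mf y yt g i j := by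
  set h : (((Fin M → ℝ) × (Fin M → ℝ)) × ℝ × ℝ) → ℝ :=
    fun x => rsign (x.1.1 i + x.2.1) * rsign (x.1.2 j + x.2.2) with hh
  have hhm : Measurable h := by
    apply Measurable.mul
    · exact measurable_rsign.comp
        (((measurable_pi_apply i).comp (measurable_fst.comp measurable_fst)).add
          (measurable_fst.comp measurable_snd))
    · exact measurable_rsign.comp
        (((measurable_pi_apply j).comp (measurable_snd.comp measurable_fst)).add
          (measurable_snd.comp measurable_snd))
  have hT2 : Measurable fun ω => ((Y k ω, Yt k ω), (d k 0 ω i, d k 1 ω j)) :=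
    (hfmeas (Sum.inl k)).prodMk
      ((hfmeas (Sum.inr (k, 0, i))).prodMk (hfmeas (Sum.inr (k, 1, j))))
  have hT1 : Measurable fun ω => ((y ω, yt ω), (g 0 ω i, g 1 ω j)) :=
    (hy.prodMk hyt).prodMk
      ((hfmeas1 (Sum.inr (0, i))).prodMk (hfmeas1 (Sum.inr (1, j))))
  have e2 : ∫ ω, Zf Y Yt d i j k ω
      = ∫ x, h x ∂(Measure.map (fun ω => ((Y k ω, Yt k ω), (d k 0 ω i, d k 1 ω j))) ℙ) :=
    (integral_map hT2.aemeasurable hhm.aestronglyMeasurable).symm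
  have e1 : mf y yt g i j
      = ∫ x, h x ∂(Measure.map (fun ω => ((y ω, yt ω), (g 0 ω i, g 1 ω j))) ℙ) :=
    (integral_map hT1.aemeasurable hhm.aestronglyMeasurable).symm
  rw [e2, e1, map_triple hfmeas hIndep k i j, map_triple1 hfmeas1 hIndep1 i j, hcopy k,
    hdunif k 0 i, hdunif k 1 j, hgunif 0 i, hgunif 1 j]

end Main


/-- concentration of the dithered one-bit sample correlation matrix. -/
theorem stmt5 :
    ∃ c1 c2 : ℝ, 0 < c1 ∧ 0 < c2 ∧
      ∀ (M N : ℕ) (Ω : Type) [MeasureSpace Ω] [IsProbabilityMeasure (ℙ : Measure Ω)],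
      ∀ (y yt : Ω → Fin M → ℝ) (Y Yt : Fin N → Ω → Fin M → ℝ)
        (d : Fin N → Fin 2 → Ω → Fin M → ℝ) (g : Fin 2 → Ω → Fin M → ℝ) (lam t : ℝ),
        0 < lam →
        Measurable y → Measurable yt →
        (∀ n, Measurable (Y n)) → (∀ n, Measurable (Yt n)) →
        (∀ n k m, Measurable fun ω => d n k ω m) →
        (∀ k m, Measurable fun ω => g k ω m) →
        -- (Y n, Yt n) are copies of the pair (y, yt) …
        (∀ n, Measure.map (fun ω => (Y n ω, Yt n ω)) ℙ
              = Measure.map (fun ω => (y ω, yt ω)) ℙ) →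
        -- … and, together with all their dither coordinates, they are independent
        ProbabilityTheory.iIndepFun (m := famMSR N M) (famFunR Y Yt d) ℙ →
        -- the generic pair is independent of its own dither coordinates
        ProbabilityTheory.iIndepFun (m := famMSR1 M) (famFunR1 y yt g) ℙ →
        -- every dither coordinate is uniform on [-λ, λ]
        (∀ n k m, Measure.map (fun ω => d n k ω m) ℙ = unifIcc lam) →
        (∀ k m, Measure.map (fun ω => g k ω m) ℙ = unifIcc lam) →
        -- N ≥ c1 log M
        c1 * Real.log M ≤ (N : ℝ) →
        0 ≤ t →
        ENNReal.ofReal (1 - 2 * Real.exp (-(c2 * N * t))) ≤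
          ℙ {ω | maxNormR (Matrix.of fun i j =>
                    (lam ^ 2 / N) * ∑ k,
                      (quantR (Y k ω) (d k 0 ω) i * quantR (Yt k ω) (d k 1 ω) j
                        - ∫ ω', quantR (y ω') (g 0 ω') i * quantR (yt ω') (g 1 ω') j))
                  < Real.sqrt (lam ^ 4 * (c1 * Real.log M / N + t))} := by
  refine ⟨24, 1/12, by norm_num, by norm_num, ?_⟩
  intro M N Ω _ _ y yt Y Yt d g lam t hlam hy hyt hY hYt hd hg hcopy hIndep hIndep1 hdunif
    hgunif hNlog ht
  -- trivial case N = 0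
  rcases Nat.eq_zero_or_pos N with hN | hN
  · subst hN
    refine le_trans (le_of_eq ?_) zero_le
    rw [ENNReal.ofReal_eq_zero]
    norm_num
  -- trivial case t = 0
  rcases eq_or_lt_of_le ht with ht0 | ht0
  · refine le_trans (le_of_eq ?_) zero_le
    rw [ENNReal.ofReal_eq_zero, ← ht0]
    norm_num
  -- trivial case M = 0
  rcases Nat.eq_zero_or_pos M with hM | hM
  · subst hM
    have hq' : (24:ℝ) * Real.log ((0:ℕ):ℝ) / N + t = t := by
      norm_num
    have hpos : 0 < Real.sqrt (lam^4 * (24 * Real.log ((0:ℕ):ℝ) / N + t)) := by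
      rw [hq']
      exact Real.sqrt_pos.mpr (by positivity)
    have hset : {ω : Ω | maxNormR (Matrix.of fun i j =>
          (lam ^ 2 / N) * ∑ k, (quantR (Y k ω) (d k 0 ω) i * quantR (Yt k ω) (d k 1 ω) j
            - ∫ ω', quantR (y ω') (g 0 ω') i * quantR (yt ω') (g 1 ω') j))
          < Real.sqrt (lam ^ 4 * (24 * Real.log ((0:ℕ):ℝ) / ↑N + t))} = Set.univ := by
      apply Set.eq_univ_iff_forall.mpr
      intro ω
      have hz : maxNormR (M := 0) (Matrix.of fun i j =>
          (lam ^ 2 / N) * ∑ k, (quantR (Y k ω) (d k 0 ω) i * quantR (Yt k ω) (d k 1 ω) j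
            - ∫ ω', quantR (y ω') (g 0 ω') i * quantR (yt ω') (g 1 ω') j)) = 0 := by
        unfold maxNormR
        exact Real.iSup_of_isEmpty _
      show maxNormR _ < _
      rw [hz]
      exact hpos
    rw [hset, measure_univ]
    exact ENNReal.ofReal_le_one.mpr (by nlinarith [Real.exp_pos (-(1/12 * (N:ℝ) * t))])
  -- main case
  have hNR : (0:ℝ) < N := by exact_mod_cast hN
  have hMR : (1:ℝ) ≤ M := by exact_mod_cast hM
  set q : ℝ := 24 * Real.log M / N + t with hq
  have hlog0 : 0 ≤ Real.log M := Real.log_nonneg hMR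
  have hq0 : 0 ≤ q := by
    rw [hq]
    have : 0 ≤ 24 * Real.log M / (N:ℝ) := by positivity
    linarith
  set s : ℝ := Real.sqrt q with hsdef
  have hs0 : 0 ≤ s := Real.sqrt_nonneg _
  have hs2 : s^2 = q := Real.sq_sqrt hq0
  have hfmeas : ∀ idx, Measurable (famFunR Y Yt d idx) := by
    intro idx
    match idx with
    | .inl n => exact (hY n).prodMk (hYt n)
    | .inr (n, k2, m') => exact hd n k2 m'
  have hfmeas1 : ∀ idx, Measurable (famFunR1 y yt g idx) := by
    intro idx
    match idx with
    | .inl _ => exact hy.prodMk hyt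
    | .inr (k2, m') => exact hg k2 m'
  have hZmeas : ∀ (i j : Fin M) (k : Fin N), Measurable (Zf Y Yt d i j k) := fun i j k =>
    (measurable_rsign.comp (((measurable_pi_apply i).comp (hY k)).add (hd k 0 i))).mul
      (measurable_rsign.comp (((measurable_pi_apply j).comp (hYt k)).add (hd k 1 j)))
  have hZabs : ∀ (i j : Fin M) (k : Fin N) ω, |Zf Y Yt d i j k ω| ≤ 1 := by
    intro i j k ω
    unfold Zf
    rw [abs_mul, abs_rsign, abs_rsign]
    norm_num
  have hmabs : ∀ i j : Fin M, |mf y yt g i j| ≤ 1 := by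
    intro i j
    have h2 : ∀ ω', |rsign (y ω' i + g 0 ω' i) * rsign (yt ω' j + g 1 ω' j)| = 1 := fun ω' => by
      rw [abs_mul, abs_rsign, abs_rsign]; norm_num
    calc |mf y yt g i j|
        = ‖∫ ω', rsign (y ω' i + g 0 ω' i) * rsign (yt ω' j + g 1 ω' j)‖ :=
          (Real.norm_eq_abs _).symm
      _ ≤ ∫ ω', ‖rsign (y ω' i + g 0 ω' i) * rsign (yt ω' j + g 1 ω' j)‖ :=
          norm_integral_le_integral_norm _
      _ = ∫ ω', |rsign (y ω' i + g 0 ω' i) * rsign (yt ω' j + g 1 ω' j)| := by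
          simp_rw [Real.norm_eq_abs]
      _ = 1 := by simp_rw [h2]; simp
  have hmean : ∀ (i j : Fin M) (k : Fin N), ∫ ω, Zf Y Yt d i j k ω = mf y yt g i j :=
    fun i j k => mean_Zf hy hyt hfmeas hfmeas1 hIndep hIndep1 hcopy hdunif hgunif i j k
  have hXabs : ∀ (i j : Fin M) (k : Fin N) ω, |Zf Y Yt d i j k ω - mf y yt g i j| ≤ 2 := by
    intro i j k ω
    have h1 := hZabs i j k ω
    have h2 := hmabs i j
    have := abs_sub (Zf Y Yt d i j k ω) (mf y yt g i j)
    calc |Zf Y Yt d i j k ω - mf y yt g i j| ≤ |Zf Y Yt d i j k ω| + |mf y yt g i j| :=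
          abs_sub _ _
      _ ≤ 2 := by linarith
  have hX0 : ∀ (i j : Fin M) (k : Fin N), ∫ ω, (Zf Y Yt d i j k ω - mf y yt g i j) = 0 := by
    intro i j k
    rw [integral_sub (integrable_of_bound (hZmeas i j k) 1 (hZabs i j k)) (integrable_const _),
      hmean i j k, integral_const]
    simp
  have hmgf1 : ∀ (i j : Fin M) (k : Fin N) (c : ℝ), |c| ≤ 1/2 →
      ∫ ω, Real.exp (c * (Zf Y Yt d i j k ω - mf y yt g i j)) ≤ Real.exp (3*c^2) :=
    fun i j k c hc =>
      mgf_single ((hZmeas i j k).sub measurable_const) (hXabs i j k) (hX0 i j k) hc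
  have hFmeas : ∀ (i j : Fin M) (c : ℝ) (n : Fin N),
      Measurable fun ω => Real.exp (c * (Zf Y Yt d i j n ω - mf y yt g i j)) := fun i j c n =>
    Real.measurable_exp.comp (((hZmeas i j n).sub measurable_const).const_mul c)
  have hFabs : ∀ (i j : Fin M) (c : ℝ) (n : Fin N) ω,
      |Real.exp (c * (Zf Y Yt d i j n ω - mf y yt g i j))| ≤ Real.exp (2*|c|) := by
    intro i j c n ω
    rw [abs_of_pos (Real.exp_pos _)]
    apply Real.exp_le_exp.mpr
    calc c * (Zf Y Yt d i j n ω - mf y yt g i j)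
        ≤ |c * (Zf Y Yt d i j n ω - mf y yt g i j)| := le_abs_self _
      _ = |c| * |Zf Y Yt d i j n ω - mf y yt g i j| := abs_mul _ _
      _ ≤ |c| * 2 := mul_le_mul_of_nonneg_left (hXabs i j n ω) (abs_nonneg c)
      _ = 2*|c| := mul_comm _ _
  have hprod : ∀ (i j : Fin M) (c : ℝ) (T : Finset (Fin N)),
      ∫ ω, ∏ k ∈ T, Real.exp (c * (Zf Y Yt d i j k ω - mf y yt g i j))
        = ∏ k ∈ T, ∫ ω, Real.exp (c * (Zf Y Yt d i j k ω - mf y yt g i j)) := by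
    intro i j c T
    classical
    induction T using Finset.induction_on with
    | empty => simp
    | @insert k T hk ih =>
      have hind : IndepFun (fun ω => Real.exp (c * (Zf Y Yt d i j k ω - mf y yt g i j)))
          (fun ω => ∏ n ∈ T, Real.exp (c * (Zf Y Yt d i j n ω - mf y yt g i j))) ℙ :=
        indep_exp_prod hfmeas hIndep i j (fun z => Real.exp (c * (z - mf y yt g i j)))
          (Real.measurable_exp.comp ((measurable_id.sub_const _).const_mul c)) T k hk
      have int1 : Integrable (fun ω => Real.exp (c * (Zf Y Yt d i j k ω - mf y yt g i j))) ℙ :=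
        integrable_of_bound (hFmeas i j c k) _ (hFabs i j c k)
      have intT : Integrable
          (fun ω => ∏ n ∈ T, Real.exp (c * (Zf Y Yt d i j n ω - mf y yt g i j))) ℙ := by
        apply integrable_of_bound (Finset.measurable_prod _ fun n _ => hFmeas i j c n)
          (Real.exp (2*|c|) ^ T.card)
        intro ω
        rw [Finset.abs_prod]
        calc ∏ n ∈ T, |Real.exp (c * (Zf Y Yt d i j n ω - mf y yt g i j))|
            ≤ ∏ _n ∈ T, Real.exp (2*|c|) :=
              Finset.prod_le_prod (fun n _ => abs_nonneg _) (fun n _ => hFabs i j c n ω)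
          _ = _ := Finset.prod_const _
      have hmul : ∫ ω, Real.exp (c * (Zf Y Yt d i j k ω - mf y yt g i j))
            * ∏ n ∈ T, Real.exp (c * (Zf Y Yt d i j n ω - mf y yt g i j))
          = (∫ ω, Real.exp (c * (Zf Y Yt d i j k ω - mf y yt g i j)))
            * ∫ ω, ∏ n ∈ T, Real.exp (c * (Zf Y Yt d i j n ω - mf y yt g i j)) :=
        hind.integral_mul_eq_mul_integral int1.aestronglyMeasurable intT.aestronglyMeasurable
      simp_rw [Finset.prod_insert hk]
      rw [hmul, ih]
  -- bound |W| ≤ 2N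
  have hWabs : ∀ (i j : Fin M) ω, |∑ k, (Zf Y Yt d i j k ω - mf y yt g i j)| ≤ 2*N := by
    intro i j ω
    calc |∑ k, (Zf Y Yt d i j k ω - mf y yt g i j)|
        ≤ ∑ k, |Zf Y Yt d i j k ω - mf y yt g i j| := Finset.abs_sum_le_sum_abs _ _
      _ ≤ ∑ _k : Fin N, (2:ℝ) := Finset.sum_le_sum fun k _ => hXabs i j k ω
      _ = 2*N := by simp [Finset.sum_const, Finset.card_univ, mul_comm]
  have hWmeas : ∀ i j : Fin M, Measurable fun ω => ∑ k, (Zf Y Yt d i j k ω - mf y yt g i j) :=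
    fun i j => Finset.measurable_sum _ fun k _ => (hZmeas i j k).sub measurable_const
  -- per-entry tail bound
  have hentry : ∀ i j : Fin M,
      ℙ {ω | (N:ℝ) * s ≤ |∑ k, (Zf Y Yt d i j k ω - mf y yt g i j)|}
        ≤ ENNReal.ofReal (2 * Real.exp (-((N:ℝ) * q) / 12)) := by
    intro i j
    by_cases hsle : s ≤ 2
    case neg =>
      have hempty : {ω | (N:ℝ)*s ≤ |∑ k, (Zf Y Yt d i j k ω - mf y yt g i j)|} = ∅ := by
        apply Set.eq_empty_iff_forall_notMem.mpr
        intro ω hω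
        simp only [Set.mem_setOf_eq] at hω
        have h1 := hWabs i j ω
        have h2 : 2*(N:ℝ) < (N:ℝ)*s := by nlinarith [not_le.mp hsle, hNR]
        linarith
      rw [hempty]
      simp
    case pos =>
      set c : ℝ := s/6 with hc
      have hc0 : 0 ≤ c := by positivity
      have hcabs : |c| ≤ 1/2 := by rw [abs_of_nonneg hc0]; rw [hc]; linarith
      have hcabs' : |(-c)| ≤ 1/2 := by rw [abs_neg]; exact hcabs
      have key : ∀ c' : ℝ, |c'| ≤ 1/2 →
          ∫ ω, Real.exp (c' * ∑ k, (Zf Y Yt d i j k ω - mf y yt g i j))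
            ≤ Real.exp ((N:ℝ) * (3 * c'^2)) := by
        intro c' hc'
        have e1 : ∀ ω, Real.exp (c' * ∑ k, (Zf Y Yt d i j k ω - mf y yt g i j))
            = ∏ k, Real.exp (c' * (Zf Y Yt d i j k ω - mf y yt g i j)) := by
          intro ω
          rw [Finset.mul_sum, Real.exp_sum]
        calc ∫ ω, Real.exp (c' * ∑ k, (Zf Y Yt d i j k ω - mf y yt g i j))
            = ∫ ω, ∏ k, Real.exp (c' * (Zf Y Yt d i j k ω - mf y yt g i j)) := by simp_rw [e1]
          _ = ∏ k, ∫ ω, Real.exp (c' * (Zf Y Yt d i j k ω - mf y yt g i j)) :=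
              hprod i j c' Finset.univ
          _ ≤ ∏ _k : Fin N, Real.exp (3 * c'^2) :=
              Finset.prod_le_prod (fun k _ => integral_nonneg fun ω => (Real.exp_pos _).le)
                (fun k _ => hmgf1 i j k c' hc')
          _ = Real.exp ((N:ℝ) * (3 * c'^2)) := by
              rw [Finset.prod_const, Finset.card_univ, Fintype.card_fin, ← Real.exp_nat_mul]
      have int_exp : ∀ c' : ℝ, Integrable
          (fun ω => Real.exp (c' * ∑ k, (Zf Y Yt d i j k ω - mf y yt g i j))) ℙ := by
        intro c'
        apply integrable_of_bound (Real.measurable_exp.comp ((hWmeas i j).const_mul c'))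
          (Real.exp (|c'| * (2*N)))
        intro ω
        show |Real.exp (c' * ∑ k, (Zf Y Yt d i j k ω - mf y yt g i j))| ≤ _
        rw [abs_of_pos (Real.exp_pos _)]
        apply Real.exp_le_exp.mpr
        calc c' * ∑ k, (Zf Y Yt d i j k ω - mf y yt g i j)
            ≤ |c' * ∑ k, (Zf Y Yt d i j k ω - mf y yt g i j)| := le_abs_self _
          _ = |c'| * |∑ k, (Zf Y Yt d i j k ω - mf y yt g i j)| := abs_mul _ _
          _ ≤ |c'| * (2*N) := mul_le_mul_of_nonneg_left (hWabs i j ω) (abs_nonneg _)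
      have harith : -(c * ((N:ℝ)*s)) + (N:ℝ)*(3*c^2) = -((N:ℝ)*q)/12 := by
        rw [hc, ← hs2]
        ring
      -- upper tail
      have up : (ℙ {ω | (N:ℝ)*s ≤ ∑ k, (Zf Y Yt d i j k ω - mf y yt g i j)}).toReal
          ≤ Real.exp (-((N:ℝ)*q)/12) := by
        have h1 := measure_ge_le_exp_mul_mgf (μ := ℙ)
          (X := fun ω => ∑ k, (Zf Y Yt d i j k ω - mf y yt g i j)) ((N:ℝ)*s) hc0 (int_exp c)
        have h2 : mgf (fun ω => ∑ k, (Zf Y Yt d i j k ω - mf y yt g i j)) ℙ c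
            ≤ Real.exp ((N:ℝ)*(3*c^2)) := key c hcabs
        calc (ℙ {ω | (N:ℝ)*s ≤ ∑ k, (Zf Y Yt d i j k ω - mf y yt g i j)}).toReal
            ≤ Real.exp (-c * ((N:ℝ)*s))
              * mgf (fun ω => ∑ k, (Zf Y Yt d i j k ω - mf y yt g i j)) ℙ c := h1
          _ ≤ Real.exp (-c * ((N:ℝ)*s)) * Real.exp ((N:ℝ)*(3*c^2)) :=
              mul_le_mul_of_nonneg_left h2 (Real.exp_pos _).le
          _ = Real.exp (-(c * ((N:ℝ)*s)) + (N:ℝ)*(3*c^2)) := by rw [← Real.exp_add]; ring_nf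
          _ = Real.exp (-((N:ℝ)*q)/12) := by rw [harith]
      -- lower tail
      have low : (ℙ {ω | (N:ℝ)*s ≤ -∑ k, (Zf Y Yt d i j k ω - mf y yt g i j)}).toReal
          ≤ Real.exp (-((N:ℝ)*q)/12) := by
        have hintneg : Integrable
            (fun ω => Real.exp (c * -∑ k, (Zf Y Yt d i j k ω - mf y yt g i j))) ℙ := by
          have e : (fun ω => Real.exp (c * -∑ k, (Zf Y Yt d i j k ω - mf y yt g i j)))
              = fun ω => Real.exp ((-c) * ∑ k, (Zf Y Yt d i j k ω - mf y yt g i j)) := by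
            funext ω; rw [mul_neg, neg_mul]
          rw [e]
          exact int_exp (-c)
        have h1 := measure_ge_le_exp_mul_mgf (μ := ℙ)
          (X := fun ω => -∑ k, (Zf Y Yt d i j k ω - mf y yt g i j)) ((N:ℝ)*s) hc0 hintneg
        have h2 : mgf (fun ω => -∑ k, (Zf Y Yt d i j k ω - mf y yt g i j)) ℙ c
            ≤ Real.exp ((N:ℝ)*(3*c^2)) := by
          have e : (fun ω => Real.exp (c * -∑ k, (Zf Y Yt d i j k ω - mf y yt g i j)))
              = fun ω => Real.exp ((-c) * ∑ k, (Zf Y Yt d i j k ω - mf y yt g i j)) := by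
            funext ω; rw [mul_neg, neg_mul]
          have : mgf (fun ω => -∑ k, (Zf Y Yt d i j k ω - mf y yt g i j)) ℙ c
              = ∫ ω, Real.exp ((-c) * ∑ k, (Zf Y Yt d i j k ω - mf y yt g i j)) := by
            unfold mgf
            rw [← e]
          rw [this]
          have hk := key (-c) hcabs'
          calc ∫ ω, Real.exp ((-c) * ∑ k, (Zf Y Yt d i j k ω - mf y yt g i j))
              ≤ Real.exp ((N:ℝ)*(3*(-c)^2)) := hk
            _ = Real.exp ((N:ℝ)*(3*c^2)) := by ring_nf
        calc (ℙ {ω | (N:ℝ)*s ≤ -∑ k, (Zf Y Yt d i j k ω - mf y yt g i j)}).toReal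
            ≤ Real.exp (-c * ((N:ℝ)*s))
              * mgf (fun ω => -∑ k, (Zf Y Yt d i j k ω - mf y yt g i j)) ℙ c := h1
          _ ≤ Real.exp (-c * ((N:ℝ)*s)) * Real.exp ((N:ℝ)*(3*c^2)) :=
              mul_le_mul_of_nonneg_left h2 (Real.exp_pos _).le
          _ = Real.exp (-(c * ((N:ℝ)*s)) + (N:ℝ)*(3*c^2)) := by rw [← Real.exp_add]; ring_nf
          _ = Real.exp (-((N:ℝ)*q)/12) := by rw [harith]
      have hsub : {ω | (N:ℝ)*s ≤ |∑ k, (Zf Y Yt d i j k ω - mf y yt g i j)|}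
          ⊆ {ω | (N:ℝ)*s ≤ ∑ k, (Zf Y Yt d i j k ω - mf y yt g i j)}
            ∪ {ω | (N:ℝ)*s ≤ -∑ k, (Zf Y Yt d i j k ω - mf y yt g i j)} := by
        intro ω hω
        simp only [Set.mem_setOf_eq] at hω
        rcases le_abs.mp hω with h | h
        · exact Or.inl h
        · exact Or.inr h
      have toEnn : ∀ (A : Set Ω), (ℙ A).toReal ≤ Real.exp (-((N:ℝ)*q)/12)
          → ℙ A ≤ ENNReal.ofReal (Real.exp (-((N:ℝ)*q)/12)) := by
        intro A hA
        rw [← ENNReal.ofReal_toReal (measure_ne_top ℙ A)]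
        exact ENNReal.ofReal_le_ofReal hA
      calc ℙ {ω | (N:ℝ)*s ≤ |∑ k, (Zf Y Yt d i j k ω - mf y yt g i j)|}
          ≤ ℙ ({ω | (N:ℝ)*s ≤ ∑ k, (Zf Y Yt d i j k ω - mf y yt g i j)}
            ∪ {ω | (N:ℝ)*s ≤ -∑ k, (Zf Y Yt d i j k ω - mf y yt g i j)}) := measure_mono hsub
        _ ≤ ℙ {ω | (N:ℝ)*s ≤ ∑ k, (Zf Y Yt d i j k ω - mf y yt g i j)}
            + ℙ {ω | (N:ℝ)*s ≤ -∑ k, (Zf Y Yt d i j k ω - mf y yt g i j)} := measure_union_le _ _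
        _ ≤ ENNReal.ofReal (Real.exp (-((N:ℝ)*q)/12))
            + ENNReal.ofReal (Real.exp (-((N:ℝ)*q)/12)) := add_le_add (toEnn _ up) (toEnn _ low)
        _ = ENNReal.ofReal (2 * Real.exp (-((N:ℝ) * q) / 12)) := by
            rw [← ENNReal.ofReal_add (Real.exp_pos _).le (Real.exp_pos _).le]
            congr 1
            ring
  -- union bound
  have hbadmeas : ∀ i j : Fin M,
      MeasurableSet {ω | (N:ℝ)*s ≤ |∑ k, (Zf Y Yt d i j k ω - mf y yt g i j)|} := fun i j =>
    measurableSet_le measurable_const (hWmeas i j).abs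
  have hbigmeas : MeasurableSet
      (⋃ i, ⋃ j, {ω | (N:ℝ)*s ≤ |∑ k, (Zf Y Yt d i j k ω - mf y yt g i j)|}) :=
    MeasurableSet.iUnion fun i => MeasurableSet.iUnion fun j => hbadmeas i j
  have hbig : ℙ (⋃ i, ⋃ j, {ω | (N:ℝ)*s ≤ |∑ k, (Zf Y Yt d i j k ω - mf y yt g i j)|})
      ≤ ENNReal.ofReal (2 * Real.exp (-(1/12 * N * t))) := by
    have hNq : (N:ℝ) * q = 24 * Real.log M + N * t := by
      rw [hq]
      field_simp
    have hexp : Real.exp (-((N:ℝ)*q)/12) = (((M:ℝ))^2)⁻¹ * Real.exp (-(1/12*N*t)) := by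
      rw [hNq, show -((24:ℝ) * Real.log M + N*t)/12 = -(2*Real.log M) + -(1/12*N*t) by ring,
        Real.exp_add]
      congr 1
      rw [show (2:ℝ)*Real.log M = Real.log ((M:ℝ)^2) by rw [Real.log_pow]; push_cast; ring,
        Real.exp_neg, Real.exp_log (by positivity : (0:ℝ) < (M:ℝ)^2)]
    have hreal : (M:ℝ) * ((M:ℝ) * (2 * Real.exp (-((N:ℝ)*q)/12)))
        ≤ 2 * Real.exp (-(1/12 * N * t)) := by
      rw [hexp]
      have hM0 : (M:ℝ) ≠ 0 := by positivity
      apply le_of_eq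
      field_simp
    calc ℙ (⋃ i, ⋃ j, {ω | (N:ℝ)*s ≤ |∑ k, (Zf Y Yt d i j k ω - mf y yt g i j)|})
        ≤ ∑' i : Fin M, ℙ (⋃ j, {ω | (N:ℝ)*s ≤ |∑ k, (Zf Y Yt d i j k ω - mf y yt g i j)|}) :=
          measure_iUnion_le _
      _ ≤ ∑' i : Fin M, ∑' j : Fin M,
            ℙ {ω | (N:ℝ)*s ≤ |∑ k, (Zf Y Yt d i j k ω - mf y yt g i j)|} :=
          ENNReal.tsum_le_tsum fun i => measure_iUnion_le _
      _ ≤ ∑' _i : Fin M, ∑' _j : Fin M, ENNReal.ofReal (2 * Real.exp (-((N:ℝ) * q) / 12)) :=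
          ENNReal.tsum_le_tsum fun i => ENNReal.tsum_le_tsum fun j => hentry i j
      _ = (M : ENNReal) * ((M : ENNReal) * ENNReal.ofReal (2 * Real.exp (-((N:ℝ) * q) / 12))) := by
          simp [tsum_fintype, Finset.sum_const, Finset.card_univ, nsmul_eq_mul]
      _ ≤ ENNReal.ofReal (2 * Real.exp (-(1/12 * N * t))) := by
          rw [← ENNReal.ofReal_natCast M, ← ENNReal.ofReal_mul (by positivity),
            ← ENNReal.ofReal_mul (by positivity)]
          exact ENNReal.ofReal_le_ofReal hreal
  -- complement inclusion
  have hθ : Real.sqrt (lam^4 * q) = lam^2 * s := by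
    rw [hsdef, Real.sqrt_mul (by positivity : (0:ℝ) ≤ lam^4) q,
      show lam^4 = (lam^2)^2 by ring, Real.sqrt_sq (by positivity : (0:ℝ) ≤ lam^2)]
  have hcompl : (⋃ i, ⋃ j, {ω | (N:ℝ)*s ≤ |∑ k, (Zf Y Yt d i j k ω - mf y yt g i j)|})ᶜ
      ⊆ {ω | maxNormR (Matrix.of fun i j =>
          (lam ^ 2 / N) * ∑ k, (Zf Y Yt d i j k ω - mf y yt g i j))
        < Real.sqrt (lam ^ 4 * q)} := by
    intro ω hω
    simp only [Set.mem_compl_iff, Set.mem_iUnion, Set.mem_setOf_eq, not_exists, not_le] at hω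
    rw [Set.mem_setOf_eq, hθ]
    apply maxNormR_lt hM
    intro i j
    have hωij := hω i j
    rw [abs_mul, abs_of_pos (show (0:ℝ) < lam^2/N by positivity)]
    calc lam^2/N * |∑ k, (Zf Y Yt d i j k ω - mf y yt g i j)|
        < lam^2/N * ((N:ℝ)*s) := by
          apply mul_lt_mul_of_pos_left hωij (by positivity)
      _ = lam^2 * s := by field_simp
  -- conclusion
  calc ENNReal.ofReal (1 - 2 * Real.exp (-(1/12 * N * t)))
      = 1 - ENNReal.ofReal (2 * Real.exp (-(1/12 * N * t))) := by
        rw [ENNReal.ofReal_sub _ (by positivity), ENNReal.ofReal_one]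
    _ ≤ 1 - ℙ (⋃ i, ⋃ j, {ω | (N:ℝ)*s ≤ |∑ k, (Zf Y Yt d i j k ω - mf y yt g i j)|}) :=
        tsub_le_tsub_left hbig 1
    _ = ℙ ((⋃ i, ⋃ j, {ω | (N:ℝ)*s ≤ |∑ k, (Zf Y Yt d i j k ω - mf y yt g i j)|})ᶜ) :=
        (prob_compl_eq_one_sub hbigmeas).symm
    _ ≤ ℙ {ω | maxNormR (Matrix.of fun i j =>
          (lam ^ 2 / N) * ∑ k, (Zf Y Yt d i j k ω - mf y yt g i j))
        < Real.sqrt (lam ^ 4 * q)} := measure_mono hcompl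

end
end

section
/- Let α > 0 and let C ∈ ℂ^{M×M} be Hermitian positive semidefinite with min_i [C]_{i,i} ≥ α. Then the arcsine-law matrix P_arcsine(C) satisfies ‖P_arcsine(C)‖ ≤ (2/α)·‖C‖, where ‖·‖ is the spectral (operator) norm. -/
open MeasureTheory ProbabilityTheory Matrix
open scoped ComplexOrder

noncomputable section

section ArcsinAux


/-- coefficients of the binomial series of (1-u)^(-1/2) -/
def bb : ℕ → ℝ
  | 0 => 1
  | (k+1) => bb k * (2*k+1) / (2*k+2)

lemma bb_nonneg (k : ℕ) : 0 ≤ bb k := by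
  induction k with
  | zero => norm_num [bb]
  | succ n ih =>
    rw [bb]
    apply div_nonneg (mul_nonneg ih (by positivity)) (by positivity)

lemma bb_rec (k : ℕ) : (2*(k:ℝ)+2) * bb (k+1) = (2*k+1) * bb k := by
  rw [bb]
  have : (2*(k:ℝ)+2) ≠ 0 := by positivity
  field_simp

lemma bb_le_one (k : ℕ) : bb k ≤ 1 := by
  induction k with
  | zero => norm_num [bb]
  | succ n ih =>
    rw [bb]
    rw [div_le_one (by positivity)]
    nlinarith [bb_nonneg n]

/-- coefficients of the arcsin series -/
def aa (k : ℕ) : ℝ := bb k / (2*k+1)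

lemma aa_nonneg (k : ℕ) : 0 ≤ aa k := div_nonneg (bb_nonneg k) (by positivity)

lemma hasDerivAt_sqrt_one_sub {u : ℝ} (hu : u < 1) :
    HasDerivAt (fun u : ℝ => Real.sqrt (1-u)) (-(1/(2*Real.sqrt (1-u)))) u := by
  have h1 : HasDerivAt (fun u : ℝ => 1 - u) (-1) u := by
    simpa using (hasDerivAt_id u).const_sub 1
  have h2 := (Real.hasDerivAt_sqrt (by linarith : 1 - u ≠ 0)).comp u h1
  refine h2.congr_deriv (Eq.symm ?_)
  ring

lemma hasDerivAt_g (n : ℕ) {u : ℝ} (hu : u < 1) :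
    HasDerivAt (fun u => Real.sqrt (1-u) * ∑ k ∈ Finset.range (n+1), bb k * u^k)
      (-((2*n+1) * bb n * u^n) / (2*Real.sqrt (1-u))) u := by
  have h1u : (0:ℝ) < 1 - u := by linarith
  have hs : (0:ℝ) < Real.sqrt (1-u) := Real.sqrt_pos.mpr h1u
  have hsq : Real.sqrt (1-u) * Real.sqrt (1-u) = 1 - u := Real.mul_self_sqrt h1u.le
  induction n with
  | zero =>
    have : (fun u : ℝ => Real.sqrt (1-u) * ∑ k ∈ Finset.range 1, bb k * u^k)
        = fun u : ℝ => Real.sqrt (1-u) := by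
      funext v; simp [bb]
    rw [this]
    convert hasDerivAt_sqrt_one_sub hu using 1
    simp [bb]
    ring
  | succ n ih =>
    have hf : (fun u : ℝ => Real.sqrt (1-u) * ∑ k ∈ Finset.range (n+2), bb k * u^k)
        = (fun u : ℝ => (Real.sqrt (1-u) * ∑ k ∈ Finset.range (n+1), bb k * u^k)
            + Real.sqrt (1-u) * (bb (n+1) * u^(n+1))) := by
      funext v
      rw [Finset.sum_range_succ]
      ring
    rw [hf]
    have hterm : HasDerivAt (fun u : ℝ => Real.sqrt (1-u) * (bb (n+1) * u^(n+1)))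
        (-(1/(2*Real.sqrt (1-u))) * (bb (n+1) * u^(n+1))
          + Real.sqrt (1-u) * (bb (n+1) * ((n+1) * u^n))) u := by
      have hp : HasDerivAt (fun u : ℝ => bb (n+1) * u^(n+1))
          (bb (n+1) * ((n+1) * u^n)) u := by
        simpa using (hasDerivAt_pow (n+1) u).const_mul (bb (n+1))
      exact (hasDerivAt_sqrt_one_sub hu).mul hp
    have := ih.add hterm
    refine this.congr_deriv (Eq.symm ?_)
    have hrec := bb_rec n
    field_simp
    push_cast
    linear_combination (-2*((n:ℝ)+1)*bb (n+1)*u^n) * hsq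
      + (-u^n) * hrec


def gG (n : ℕ) (v : ℝ) : ℝ := 1 - Real.sqrt (1-v) * ∑ k ∈ Finset.range (n+1), bb k * v^k

lemma hasDerivAt_gG (n : ℕ) {u : ℝ} (hu : u < 1) :
    HasDerivAt (gG n) ((2*n+1) * bb n * u^n / (2*Real.sqrt (1-u))) u := by
  have := (hasDerivAt_g n hu).const_sub 1
  refine this.congr_deriv (Eq.symm ?_)
  ring

lemma gG_continuous (n : ℕ) : Continuous (gG n) := by
  unfold gG
  have h1 : Continuous (fun v : ℝ => Real.sqrt (1-v)) :=
    Real.continuous_sqrt.comp (continuous_const.sub continuous_id)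
  have h2 : Continuous (fun v : ℝ => ∑ k ∈ Finset.range (n+1), bb k * v^k) := by
    apply continuous_finset_sum
    intro k _
    exact continuous_const.mul (continuous_pow k)
  exact continuous_const.sub (h1.mul h2)

lemma gG_zero (n : ℕ) : gG n 0 = 0 := by
  unfold gG
  rw [Finset.sum_eq_single_of_mem 0 (Finset.mem_range.mpr (Nat.succ_pos n))]
  · simp [bb]
  · intro k _ hk
    simp [zero_pow hk]

lemma gG_bounds (n : ℕ) {u : ℝ} (h0 : 0 ≤ u) (h1 : u < 1) :
    0 ≤ gG n u ∧ gG n u ≤ (2*n+1) * bb n * u^n / (2*Real.sqrt (1-u)) := by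
  constructor
  · -- monotone from 0
    have hmono : MonotoneOn (gG n) (Set.Icc 0 u) := by
      apply monotoneOn_of_deriv_nonneg (convex_Icc 0 u) (gG_continuous n).continuousOn
      · intro x hx
        rw [interior_Icc] at hx
        exact (hasDerivAt_gG n (lt_trans hx.2 h1)).differentiableAt.differentiableWithinAt
      · intro x hx
        rw [interior_Icc] at hx
        rw [(hasDerivAt_gG n (lt_trans hx.2 h1)).deriv]
        have hs : (0:ℝ) < Real.sqrt (1-x) := Real.sqrt_pos.mpr (by linarith [hx.2])
        exact div_nonneg (mul_nonneg (mul_nonneg (by positivity) (bb_nonneg n))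
          (pow_nonneg hx.1.le n)) (by positivity)
    have := hmono (Set.left_mem_Icc.mpr h0) (Set.right_mem_Icc.mpr h0) h0
    rwa [gG_zero] at this
  · have key := norm_image_sub_le_of_norm_deriv_le_segment'
      (f := gG n) (f' := fun t => (2*n+1) * bb n * t^n / (2*Real.sqrt (1-t)))
      (a := 0) (b := u) (C := (2*n+1) * bb n * u^n / (2*Real.sqrt (1-u)))
      (fun x hx => (hasDerivAt_gG n (lt_of_le_of_lt hx.2 h1)).hasDerivWithinAt)
      ?_ u (Set.right_mem_Icc.mpr h0)
    · rw [gG_zero, sub_zero] at key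
      calc gG n u ≤ |gG n u| := le_abs_self _
        _ ≤ (2*n+1) * bb n * u^n / (2*Real.sqrt (1-u)) * (u - 0) := key
        _ ≤ (2*n+1) * bb n * u^n / (2*Real.sqrt (1-u)) * 1 := by
            apply mul_le_mul_of_nonneg_left (by linarith)
            have hs : (0:ℝ) < Real.sqrt (1-u) := Real.sqrt_pos.mpr (by linarith)
            exact div_nonneg (mul_nonneg (mul_nonneg (by positivity) (bb_nonneg n))
              (pow_nonneg h0 n)) (by positivity)
        _ = _ := mul_one _
    · intro t ht
      have htu : t < 1 := lt_trans ht.2 h1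
      have hs : (0:ℝ) < Real.sqrt (1-t) := Real.sqrt_pos.mpr (by linarith)
      have hsu : (0:ℝ) < Real.sqrt (1-u) := Real.sqrt_pos.mpr (by linarith)
      rw [Real.norm_eq_abs, abs_of_nonneg (div_nonneg (mul_nonneg (mul_nonneg (by positivity)
        (bb_nonneg n)) (pow_nonneg ht.1 n)) (by positivity))]
      apply div_le_div₀ (mul_nonneg (mul_nonneg (by positivity) (bb_nonneg n)) (pow_nonneg h0 n))
      · apply mul_le_mul_of_nonneg_left _ (mul_nonneg (by positivity) (bb_nonneg n))
        exact pow_le_pow_left₀ ht.1 ht.2.le n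
      · positivity
      · have : Real.sqrt (1-u) ≤ Real.sqrt (1-t) := Real.sqrt_le_sqrt (by linarith [ht.2])
        linarith


def Qs (n : ℕ) (x : ℝ) : ℝ := ∑ k ∈ Finset.range (n+1), aa k * x^(2*k+1)

lemma hasDerivAt_Qs (n : ℕ) (x : ℝ) :
    HasDerivAt (fun x => Qs n x) (∑ k ∈ Finset.range (n+1), bb k * (x^2)^k) x := by
  unfold Qs
  apply HasDerivAt.fun_sum
  intro k _
  have h := (hasDerivAt_pow (2*k+1) x).const_mul (aa k)
  refine h.congr_deriv (Eq.symm ?_)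
  have h1 : 2*k+1-1 = 2*k := by omega
  rw [h1, ← pow_mul]
  unfold aa
  have h2 : (2*(k:ℝ)+1) ≠ 0 := by positivity
  push_cast
  field_simp

lemma Qs_zero_eval (n : ℕ) : Qs n 0 = 0 := by
  unfold Qs
  apply Finset.sum_eq_zero
  intro k _
  simp

lemma F_bounds (n : ℕ) {x : ℝ} (h0 : 0 ≤ x) (h1 : x < 1) :
    0 ≤ Real.arcsin x - Qs n x ∧
      Real.arcsin x - Qs n x ≤ (2*n+1) * bb n * x^(2*n) / (2*(1-x^2)) := by
  set F : ℝ → ℝ := fun t => Real.arcsin t - Qs n t with hF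
  have hderiv : ∀ t : ℝ, 0 ≤ t → t < 1 → HasDerivAt F (gG n (t^2) / Real.sqrt (1-t^2)) t := by
    intro t ht0 ht1
    have harc := Real.hasDerivAt_arcsin (by linarith : t ≠ -1) (ne_of_lt ht1)
    have h := harc.sub (hasDerivAt_Qs n t)
    refine h.congr_deriv (Eq.symm ?_)
    have ht2 : t^2 < 1 := by nlinarith
    have hs : (0:ℝ) < Real.sqrt (1-t^2) := Real.sqrt_pos.mpr (by linarith)
    unfold gG
    field_simp
  -- derivative bound on [0,x]
  have hdbound : ∀ t : ℝ, 0 ≤ t → t ≤ x →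
      0 ≤ gG n (t^2) / Real.sqrt (1-t^2) ∧
      gG n (t^2) / Real.sqrt (1-t^2) ≤ (2*n+1) * bb n * x^(2*n) / (2*(1-x^2)) := by
    intro t ht0 htx
    have ht1 : t < 1 := lt_of_le_of_lt htx h1
    have ht2 : t^2 < 1 := by nlinarith
    have hx2 : x^2 < 1 := by nlinarith
    have hs : (0:ℝ) < Real.sqrt (1-t^2) := Real.sqrt_pos.mpr (by linarith)
    have hgb := gG_bounds n (by positivity : (0:ℝ) ≤ t^2) ht2
    constructor
    · exact div_nonneg hgb.1 hs.le
    · have hsq : Real.sqrt (1-t^2) * Real.sqrt (1-t^2) = 1-t^2 :=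
        Real.mul_self_sqrt (by linarith)
      have step1 : gG n (t^2) / Real.sqrt (1-t^2)
          ≤ (2*n+1) * bb n * (t^2)^n / (2*(1-t^2)) := by
        rw [div_le_div_iff₀ hs (by linarith)]
        calc gG n (t^2) * (2*(1-t^2))
            = gG n (t^2) * (2 * (Real.sqrt (1-t^2) * Real.sqrt (1-t^2))) := by rw [hsq]
          _ ≤ ((2*n+1) * bb n * (t^2)^n / (2*Real.sqrt (1-t^2)))
              * (2 * (Real.sqrt (1-t^2) * Real.sqrt (1-t^2))) := by
              apply mul_le_mul_of_nonneg_right hgb.2 (by positivity)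
          _ = (2*n+1) * bb n * (t^2)^n * Real.sqrt (1-t^2) := by
              field_simp
      refine le_trans step1 ?_
      rw [← pow_mul, mul_comm 2 n]
      apply div_le_div₀ (mul_nonneg (mul_nonneg (by positivity) (bb_nonneg n))
        (pow_nonneg (by positivity) _))
      · apply mul_le_mul_of_nonneg_left _ (mul_nonneg (by positivity) (bb_nonneg n))
        apply pow_le_pow_left₀ (by positivity) _ _
        nlinarith
      · linarith
      · nlinarith
  constructor
  · -- monotonicity
    have hmono : MonotoneOn F (Set.Icc 0 x) := by
      apply monotoneOn_of_deriv_nonneg (convex_Icc 0 x)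
      · apply ContinuousOn.sub Real.continuous_arcsin.continuousOn
        apply Continuous.continuousOn
        apply continuous_finset_sum
        intro k _
        exact continuous_const.mul (continuous_pow _)
      · intro t ht
        rw [interior_Icc] at ht
        exact (hderiv t ht.1.le (lt_of_lt_of_le ht.2 (le_of_lt h1))).differentiableAt.differentiableWithinAt
      · intro t ht
        rw [interior_Icc] at ht
        rw [(hderiv t ht.1.le (lt_trans ht.2 h1)).deriv]
        exact (hdbound t ht.1.le ht.2.le).1
    have := hmono (Set.left_mem_Icc.mpr h0) (Set.right_mem_Icc.mpr h0) h0
    have hF0 : F 0 = 0 := by simp [hF, Qs_zero_eval, Real.arcsin_zero]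
    rw [hF0] at this
    exact this
  · have key := norm_image_sub_le_of_norm_deriv_le_segment'
      (f := F) (f' := fun t => gG n (t^2) / Real.sqrt (1-t^2))
      (a := 0) (b := x) (C := (2*n+1) * bb n * x^(2*n) / (2*(1-x^2)))
      (fun t ht => (hderiv t ht.1 (lt_of_le_of_lt ht.2 h1)).hasDerivWithinAt)
      ?_ x (Set.right_mem_Icc.mpr h0)
    · have hF0 : F 0 = 0 := by simp [hF, Qs_zero_eval, Real.arcsin_zero]
      rw [hF0, sub_zero] at key
      calc F x ≤ |F x| := le_abs_self _
        _ ≤ (2*n+1) * bb n * x^(2*n) / (2*(1-x^2)) * (x - 0) := key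
        _ ≤ (2*n+1) * bb n * x^(2*n) / (2*(1-x^2)) * 1 := by
            apply mul_le_mul_of_nonneg_left (by linarith)
            exact div_nonneg (mul_nonneg (mul_nonneg (by positivity) (bb_nonneg n))
              (pow_nonneg h0 _)) (by nlinarith)
        _ = _ := mul_one _
    · intro t ht
      have hb := hdbound t ht.1 ht.2.le
      rw [Real.norm_eq_abs, abs_of_nonneg hb.1]
      exact hb.2


lemma tendsto_coeff_aux {r : ℝ} (h0 : 0 ≤ r) (h1 : r < 1) :
    Filter.Tendsto (fun n : ℕ => (2*(n:ℝ)+1) * bb n * r^n) Filter.atTop (nhds 0) := by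
  have hsum : Summable (fun n : ℕ => (2*(n:ℝ)+1) * r^n) := by
    have h1' : ‖r‖ < 1 := by rw [Real.norm_eq_abs, abs_of_nonneg h0]; exact h1
    have hs1 := summable_pow_mul_geometric_of_norm_lt_one 1 h1' (R := ℝ)
    have hs2 := summable_geometric_of_norm_lt_one h1'
    have := (hs1.mul_left 2).add hs2
    apply this.congr
    intro n
    simp
    ring
  have htend := hsum.tendsto_atTop_zero
  apply squeeze_zero
  · intro n
    exact mul_nonneg (mul_nonneg (by positivity) (bb_nonneg n)) (pow_nonneg h0 n)
  · intro n
    calc (2*(n:ℝ)+1) * bb n * r^n ≤ (2*(n:ℝ)+1) * 1 * r^n := by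
          apply mul_le_mul_of_nonneg_right _ (pow_nonneg h0 n)
          exact mul_le_mul_of_nonneg_left (bb_le_one n) (by positivity)
      _ = (2*(n:ℝ)+1) * r^n := by ring
  · exact htend

lemma tendsto_Qs {x : ℝ} (h0 : 0 ≤ x) (h1 : x < 1) :
    Filter.Tendsto (fun n => Qs n x) Filter.atTop (nhds (Real.arcsin x)) := by
  have hx2 : x^2 < 1 := by nlinarith
  have hx20 : (0:ℝ) ≤ x^2 := by positivity
  have hc := (tendsto_coeff_aux hx20 hx2).div_const (2*(1-x^2))
  rw [zero_div] at hc
  have hsq : Filter.Tendsto (fun n => Real.arcsin x - Qs n x) Filter.atTop (nhds 0) := by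
    apply squeeze_zero (fun n => (F_bounds n h0 h1).1) (fun n => ?_) hc
    have := (F_bounds n h0 h1).2
    calc Real.arcsin x - Qs n x ≤ (2*n+1) * bb n * x^(2*n) / (2*(1-x^2)) := this
      _ = (2*(n:ℝ)+1) * bb n * (x^2)^n / (2*(1-x^2)) := by rw [← pow_mul, mul_comm 2 n]
  have := (hsq.const_sub (Real.arcsin x))
  simpa using this

lemma hasSum_arcsin_nonneg {x : ℝ} (h0 : 0 ≤ x) (h1 : x < 1) :
    HasSum (fun k => aa k * x^(2*k+1)) (Real.arcsin x) := by
  have hnn : ∀ k, 0 ≤ aa k * x^(2*k+1) :=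
    fun k => mul_nonneg (aa_nonneg k) (pow_nonneg h0 _)
  have hbd : ∀ n, ∑ i ∈ Finset.range n, aa i * x^(2*i+1) ≤ Real.arcsin x := by
    intro n
    cases n with
    | zero => simpa using Real.arcsin_nonneg.mpr h0
    | succ m =>
      have := (F_bounds m h0 h1).1
      have hq : Qs m x = ∑ i ∈ Finset.range (m+1), aa i * x^(2*i+1) := rfl
      linarith [this]
  have hsummable : Summable (fun k => aa k * x^(2*k+1)) :=
    summable_of_sum_range_le hnn hbd
  have h2 := hsummable.hasSum
  have h3 := h2.tendsto_sum_nat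
  have h4 : Filter.Tendsto (fun n => ∑ i ∈ Finset.range (n+1), aa i * x^(2*i+1))
      Filter.atTop (nhds (∑' k, aa k * x^(2*k+1))) :=
    h3.comp (Filter.tendsto_add_atTop_nat 1)
  have h5 := tendsto_Qs h0 h1
  have : (∑' k, aa k * x^(2*k+1)) = Real.arcsin x := tendsto_nhds_unique h4 h5
  rwa [this] at h2

lemma sum_range_aa_le (n : ℕ) : ∑ i ∈ Finset.range n, aa i ≤ Real.pi / 2 := by
  cases n with
  | zero => simp [Real.pi_pos.le]; positivity
  | succ m =>
    have hne : (nhdsWithin (1:ℝ) (Set.Ioo (0:ℝ) 1)).NeBot := by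
      apply mem_closure_iff_nhdsWithin_neBot.mp
      rw [closure_Ioo (by norm_num : (0:ℝ) ≠ 1)]
      exact Set.right_mem_Icc.mpr (by norm_num)
    have hcont : Filter.Tendsto (fun x : ℝ => ∑ i ∈ Finset.range (m+1), aa i * x^(2*i+1))
        (nhdsWithin (1:ℝ) (Set.Ioo (0:ℝ) 1))
        (nhds (∑ i ∈ Finset.range (m+1), aa i * (1:ℝ)^(2*i+1))) := by
      apply Filter.Tendsto.mono_left _ nhdsWithin_le_nhds
      apply Continuous.tendsto
      apply continuous_finset_sum
      intro k _
      exact continuous_const.mul (continuous_pow _)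
    have hev : ∀ᶠ x in nhdsWithin (1:ℝ) (Set.Ioo (0:ℝ) 1),
        (∑ i ∈ Finset.range (m+1), aa i * x^(2*i+1)) ≤ Real.pi / 2 := by
      filter_upwards [self_mem_nhdsWithin] with x hx
      have hb := (F_bounds m hx.1.le hx.2).1
      have : Qs m x ≤ Real.arcsin x := by linarith
      exact le_trans this (Real.arcsin_le_pi_div_two x)
    have := le_of_tendsto hcont hev
    simpa using this

lemma summable_aa : Summable aa := summable_of_sum_range_le aa_nonneg sum_range_aa_le

lemma hasSum_aa_pi : HasSum aa (Real.pi / 2) := by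
  have hs := summable_aa
  have hle : ∑' k, aa k ≤ Real.pi / 2 := by
    apply Real.tsum_le_of_sum_range_le aa_nonneg sum_range_aa_le
  have hge : Real.pi / 2 ≤ ∑' k, aa k := by
    have hne : (nhdsWithin (1:ℝ) (Set.Ioo (0:ℝ) 1)).NeBot := by
      apply mem_closure_iff_nhdsWithin_neBot.mp
      rw [closure_Ioo (by norm_num : (0:ℝ) ≠ 1)]
      exact Set.right_mem_Icc.mpr (by norm_num)
    have hcont : Filter.Tendsto Real.arcsin (nhdsWithin (1:ℝ) (Set.Ioo (0:ℝ) 1))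
        (nhds (Real.arcsin 1)) :=
      (Real.continuous_arcsin.tendsto 1).mono_left nhdsWithin_le_nhds
    rw [Real.arcsin_one] at hcont
    apply le_of_tendsto hcont
    filter_upwards [self_mem_nhdsWithin] with x hx
    rw [← (hasSum_arcsin_nonneg hx.1.le hx.2).tsum_eq]
    apply Summable.tsum_le_tsum _ (hasSum_arcsin_nonneg hx.1.le hx.2).summable hs
    intro k
    calc aa k * x^(2*k+1) ≤ aa k * 1 := by
          apply mul_le_mul_of_nonneg_left _ (aa_nonneg k)
          exact pow_le_one₀ hx.1.le hx.2.le
      _ = aa k := mul_one _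
  have heq : ∑' k, aa k = Real.pi / 2 := le_antisymm hle hge
  have := hs.hasSum
  rwa [heq] at this

theorem hasSum_arcsin {x : ℝ} (hx : |x| ≤ 1) :
    HasSum (fun k => aa k * x^(2*k+1)) (Real.arcsin x) := by
  rcases abs_le.mp hx with ⟨hxl, hxr⟩
  rcases le_or_gt 0 x with h0 | h0
  · rcases eq_or_lt_of_le hxr with h1 | h1
    · subst h1
      simpa [Real.arcsin_one] using hasSum_aa_pi
    · exact hasSum_arcsin_nonneg h0 h1
  · have hy0 : 0 ≤ -x := by linarith
    have hy1 : -x ≤ 1 := by linarith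
    have h : HasSum (fun k => aa k * (-x)^(2*k+1)) (Real.arcsin (-x)) := by
      rcases eq_or_lt_of_le hy1 with h1 | h1
      · have hx1 : x = -1 := by linarith
        subst hx1
        have := hasSum_aa_pi
        rw [show Real.pi / 2 = Real.arcsin (-(-1:ℝ)) by norm_num [Real.arcsin_one]] at this
        apply this.congr_fun
        intro k
        norm_num
      · exact hasSum_arcsin_nonneg hy0 h1
    have h2 := h.neg
    rw [Real.arcsin_neg, neg_neg] at h2
    have heq : (fun k => -(aa k * (-x)^(2*k+1))) = (fun k => aa k * x^(2*k+1)) := by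
      funext k
      have : (-x)^(2*k+1) = -(x^(2*k+1)) := Odd.neg_pow (by exact ⟨k, by ring⟩) x
      rw [this]
      ring
    rwa [heq] at h2


end ArcsinAux

section MatrixAux

variable {M : ℕ}


local notation "⟪" x ", " y "⟫" => @inner ℂ _ _ x y

/-- bilinear form of a matrix -/
def bil (A : Matrix (Fin M) (Fin M) ℂ) (u v : EuclideanSpace ℂ (Fin M)) : ℂ :=
  ∑ i, ∑ j, (starRingEnd ℂ) (u i) * A i j * v j

lemma inner_toEuclideanCLM (A : Matrix (Fin M) (Fin M) ℂ) (u v : EuclideanSpace ℂ (Fin M)) :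
    ⟪u, (Matrix.toEuclideanCLM (𝕜 := ℂ) A) v⟫ = bil A u v := by
  have happ : ∀ i, (Matrix.toEuclideanCLM (𝕜 := ℂ) A) v i = ∑ j, A i j * v j := by
    intro i
    rfl
  rw [PiLp.inner_apply]
  unfold bil
  congr 1
  funext i
  rw [happ i, RCLike.inner_apply, Finset.sum_mul]
  congr 1
  funext j
  ring

lemma abs_bil_le (A : Matrix (Fin M) (Fin M) ℂ) (u v : EuclideanSpace ℂ (Fin M)) :
    ‖bil A u v‖ ≤ specNorm A * ‖u‖ * ‖v‖ := by
  rw [← _root_.inner_toEuclideanCLM]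
  calc ‖⟪u, (Matrix.toEuclideanCLM (𝕜 := ℂ) A) v⟫‖
      ≤ ‖u‖ * ‖(Matrix.toEuclideanCLM (𝕜 := ℂ) A) v‖ := norm_inner_le_norm _ _
    _ ≤ ‖u‖ * (specNorm A * ‖v‖) :=
        mul_le_mul_of_nonneg_left ((Matrix.toEuclideanCLM (𝕜 := ℂ) A).le_opNorm v) (norm_nonneg u)
    _ = specNorm A * ‖u‖ * ‖v‖ := by ring

lemma specNorm_le_of_bil (A : Matrix (Fin M) (Fin M) ℂ) (K : ℝ) (hK : 0 ≤ K)
    (h : ∀ u v : EuclideanSpace ℂ (Fin M), ‖bil A u v‖ ≤ K * ‖u‖ * ‖v‖) :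
    specNorm A ≤ K := by
  unfold specNorm
  apply ContinuousLinearMap.opNorm_le_bound _ hK
  intro v
  set w := (Matrix.toEuclideanCLM (𝕜 := ℂ) A) v with hw
  rcases eq_or_lt_of_le (norm_nonneg w) with h0 | h0
  · rw [← h0]; positivity
  · have h1 : (‖w‖ : ℝ)^2 = ‖⟪w, w⟫‖ := by
      rw [inner_self_eq_norm_sq_to_K (𝕜 := ℂ)]
      push_cast
      simp
    have h2 : ‖⟪w, w⟫‖ ≤ K * ‖w‖ * ‖v‖ := by
      rw [hw, _root_.inner_toEuclideanCLM]
      exact h w v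
    nlinarith [norm_nonneg w, norm_nonneg v]


open scoped MatrixOrder in
lemma psd_sqrt_aux (c : Matrix (Fin M) (Fin M) ℂ) (hc : c.PosSemidef) :
    ∃ S : Matrix (Fin M) (Fin M) ℂ, Sᴴ = S ∧ S * S = c := by
  obtain ⟨X, hX, -, hXX⟩ := CFC.exists_sqrt_of_isSelfAdjoint_of_quasispectrumRestricts hc.isHermitian
    (QuasispectrumRestricts.nnreal_of_nonneg hc.nonneg)
  exact ⟨X, hX, hXX⟩

/-- conjugate vector -/
def cvec (u : EuclideanSpace ℂ (Fin M)) : EuclideanSpace ℂ (Fin M) :=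
  WithLp.toLp 2 (fun i => (starRingEnd ℂ) (u i))

lemma norm_cvec (u : EuclideanSpace ℂ (Fin M)) : ‖cvec u‖ = ‖u‖ := by
  rw [EuclideanSpace.norm_eq, EuclideanSpace.norm_eq]
  congr 1
  apply Finset.sum_congr rfl
  intro i _
  simp [cvec]

/-- Core lemma: Hadamard multiplier with a Gram matrix with diagonal ≤ 1 contracts
the bilinear form. -/
lemma core_gram {ι : Type} [Fintype ι] (A : Matrix (Fin M) (Fin M) ℂ)
    (B : ι → Fin M → ℂ) (hdiag : ∀ i, ∑ k, ‖B k i‖^2 ≤ 1)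
    (u v : EuclideanSpace ℂ (Fin M)) :
    ‖∑ i, ∑ j, (starRingEnd ℂ) (u i) * A i j
        * (∑ k, (starRingEnd ℂ) (B k i) * B k j) * v j‖
      ≤ specNorm A * ‖u‖ * ‖v‖ := by
  classical
  set uu : ι → EuclideanSpace ℂ (Fin M) := fun k => WithLp.toLp 2 (fun i => u i * B k i) with huu
  set vv : ι → EuclideanSpace ℂ (Fin M) := fun k => WithLp.toLp 2 (fun j => v j * B k j) with hvv
  have hre : (∑ i, ∑ j, (starRingEnd ℂ) (u i) * A i j
        * (∑ k, (starRingEnd ℂ) (B k i) * B k j) * v j)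
      = ∑ k, bil A (uu k) (vv k) := by
    unfold bil
    calc (∑ i, ∑ j, (starRingEnd ℂ) (u i) * A i j
        * (∑ k, (starRingEnd ℂ) (B k i) * B k j) * v j)
        = ∑ i, ∑ j, ∑ k, (starRingEnd ℂ) (u i) * A i j
            * ((starRingEnd ℂ) (B k i) * B k j) * v j := by
          apply Finset.sum_congr rfl; intro i _
          apply Finset.sum_congr rfl; intro j _
          rw [Finset.mul_sum, Finset.sum_mul]
      _ = ∑ i, ∑ k, ∑ j, (starRingEnd ℂ) (u i) * A i j
            * ((starRingEnd ℂ) (B k i) * B k j) * v j := by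
          apply Finset.sum_congr rfl; intro i _
          rw [Finset.sum_comm]
      _ = ∑ k, ∑ i, ∑ j, (starRingEnd ℂ) (u i) * A i j
            * ((starRingEnd ℂ) (B k i) * B k j) * v j := by
          rw [Finset.sum_comm]
      _ = ∑ k, ∑ i, ∑ j, (starRingEnd ℂ) (uu k i) * A i j * vv k j := by
          apply Finset.sum_congr rfl; intro k _
          apply Finset.sum_congr rfl; intro i _
          apply Finset.sum_congr rfl; intro j _
          simp only [huu, hvv, _root_.map_mul]
          ring
  rw [hre]
  -- bound each term and use Cauchy-Schwarz
  have hterm : ∀ k, ‖bil A (uu k) (vv k)‖ ≤ specNorm A * (‖uu k‖ * ‖vv k‖) := by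
    intro k
    have := abs_bil_le A (uu k) (vv k)
    linarith [this]
  have hspec : (0:ℝ) ≤ specNorm A := norm_nonneg _
  calc ‖∑ k, bil A (uu k) (vv k)‖
      ≤ ∑ k, ‖bil A (uu k) (vv k)‖ := by
        simpa using norm_sum_le Finset.univ (fun k => bil A (uu k) (vv k))
    _ ≤ ∑ k, specNorm A * (‖uu k‖ * ‖vv k‖) := Finset.sum_le_sum (fun k _ => hterm k)
    _ = specNorm A * ∑ k, ‖uu k‖ * ‖vv k‖ := by rw [Finset.mul_sum]
    _ ≤ specNorm A * (‖u‖ * ‖v‖) := by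
        apply mul_le_mul_of_nonneg_left _ hspec
        -- Cauchy-Schwarz
        have hcs := Finset.sum_mul_sq_le_sq_mul_sq Finset.univ
          (fun k => ‖uu k‖) (fun k => ‖vv k‖)
        have huub : ∑ k, ‖uu k‖^2 ≤ ‖u‖^2 := by
          have h1 : ∀ k, ‖uu k‖^2 = ∑ i, ‖u i‖^2 * ‖B k i‖^2 := by
            intro k
            rw [EuclideanSpace.norm_eq, Real.sq_sqrt (by positivity)]
            apply Finset.sum_congr rfl; intro i _
            simp only [huu]
            rw [norm_mul]
            ring
          rw [Finset.sum_congr rfl (fun k _ => h1 k), Finset.sum_comm]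
          have h2 : ‖u‖^2 = ∑ i, ‖u i‖^2 := by
            rw [EuclideanSpace.norm_eq, Real.sq_sqrt (by positivity)]
          rw [h2]
          apply Finset.sum_le_sum
          intro i _
          rw [← Finset.mul_sum]
          calc ‖u i‖^2 * ∑ k, ‖B k i‖^2
              ≤ ‖u i‖^2 * 1 := by
                apply mul_le_mul_of_nonneg_left (hdiag i) (by positivity)
            _ = ‖u i‖^2 := mul_one _
        have hvvb : ∑ k, ‖vv k‖^2 ≤ ‖v‖^2 := by
          have h1 : ∀ k, ‖vv k‖^2 = ∑ i, ‖v i‖^2 * ‖B k i‖^2 := by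
            intro k
            rw [EuclideanSpace.norm_eq, Real.sq_sqrt (by positivity)]
            apply Finset.sum_congr rfl; intro i _
            simp only [hvv]
            rw [norm_mul]
            ring
          rw [Finset.sum_congr rfl (fun k _ => h1 k), Finset.sum_comm]
          have h2 : ‖v‖^2 = ∑ i, ‖v i‖^2 := by
            rw [EuclideanSpace.norm_eq, Real.sq_sqrt (by positivity)]
          rw [h2]
          apply Finset.sum_le_sum
          intro i _
          rw [← Finset.mul_sum]
          calc ‖v i‖^2 * ∑ k, ‖B k i‖^2
              ≤ ‖v i‖^2 * 1 := by
                apply mul_le_mul_of_nonneg_left (hdiag i) (by positivity)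
            _ = ‖v i‖^2 := mul_one _
        have hsum_nonneg : (0:ℝ) ≤ ∑ k, ‖uu k‖ * ‖vv k‖ :=
          Finset.sum_nonneg (fun k _ => mul_nonneg (norm_nonneg _) (norm_nonneg _))
        have hQ : (0:ℝ) ≤ ∑ k, ‖vv k‖^2 :=
          Finset.sum_nonneg (fun k _ => sq_nonneg _)
        have h3 : (∑ k, ‖uu k‖ * ‖vv k‖)^2 ≤ ‖u‖^2 * ‖v‖^2 :=
          le_trans hcs (mul_le_mul huub hvvb hQ (sq_nonneg ‖u‖))
        nlinarith [h3, hsum_nonneg, mul_nonneg (norm_nonneg u) (norm_nonneg v)]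
    _ = specNorm A * ‖u‖ * ‖v‖ := by ring

lemma Sbound_aux (c : Matrix (Fin M) (Fin M) ℂ) (hc : c.PosSemidef) (hdiag : ∀ i, c i i = 1)
    (p q : ℕ) (u v : EuclideanSpace ℂ (Fin M)) :
    ‖∑ i, ∑ j, (starRingEnd ℂ) (u i) *
        ((c i j)^(p+1) * ((starRingEnd ℂ) (c i j))^q) * v j‖
      ≤ specNorm c * ‖u‖ * ‖v‖ := by
  classical
  obtain ⟨S, hSH, hSS⟩ := psd_sqrt_aux c hc
  have hrep : ∀ i j, c i j = ∑ k, (starRingEnd ℂ) (S k i) * S k j := by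
    intro i j
    rw [← hSS, Matrix.mul_apply]
    apply Finset.sum_congr rfl
    intro k _
    congr 1
    conv_rhs => rw [← hSH]
    simp [Matrix.conjTranspose_apply]
  have hconjrep : ∀ i j, (starRingEnd ℂ) (c i j)
      = ∑ k, (starRingEnd ℂ) ((starRingEnd ℂ) (S k i)) * (starRingEnd ℂ) (S k j) := by
    intro i j
    rw [hrep i j, map_sum]
    apply Finset.sum_congr rfl
    intro k _
    rw [_root_.map_mul]
  set B : ((Fin p → Fin M) × (Fin q → Fin M)) → Fin M → ℂ :=
    fun kl i => (∏ t : Fin p, S (kl.1 t) i) * (∏ t : Fin q, (starRingEnd ℂ) (S (kl.2 t) i))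
    with hB
  have hG : ∀ i j, (∑ k, (starRingEnd ℂ) (B k i) * B k j)
      = (c i j)^p * ((starRingEnd ℂ) (c i j))^q := by
    intro i j
    rw [hconjrep i j, hrep i j, Finset.sum_pow', Finset.sum_pow', Finset.sum_mul_sum]
    rw [Fintype.sum_prod_type]
    simp only [Fintype.piFinset_univ]
    apply Finset.sum_congr rfl
    intro k1 _
    apply Finset.sum_congr rfl
    intro k2 _
    simp only [hB, _root_.map_mul, map_prod]
    rw [Finset.prod_mul_distrib, Finset.prod_mul_distrib]
    ring
  have hdiagB : ∀ i, ∑ k, ‖B k i‖^2 ≤ 1 := by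
    intro i
    have h1 : (∑ k, (starRingEnd ℂ) (B k i) * B k i) = 1 := by
      rw [hG i i, hdiag i]
      simp
    have h2 : (∑ k, (starRingEnd ℂ) (B k i) * B k i)
        = ((∑ k, ‖B k i‖^2 : ℝ) : ℂ) := by
      push_cast
      apply Finset.sum_congr rfl
      intro k _
      rw [Complex.conj_mul']
    rw [h2] at h1
    have h3 : (∑ k, ‖B k i‖^2 : ℝ) = 1 := by
      exact_mod_cast h1
    rw [h3]
  have hpoint : ∀ i j, (starRingEnd ℂ) (u i) * ((c i j)^(p+1) * ((starRingEnd ℂ) (c i j))^q) * v j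
      = (starRingEnd ℂ) (u i) * c i j * (∑ k, (starRingEnd ℂ) (B k i) * B k j) * v j := by
    intro i j
    rw [hG i j, pow_succ]
    ring
  calc ‖∑ i, ∑ j, (starRingEnd ℂ) (u i) *
        ((c i j)^(p+1) * ((starRingEnd ℂ) (c i j))^q) * v j‖
      = ‖∑ i, ∑ j, (starRingEnd ℂ) (u i) * (c i j)
          * (∑ k, (starRingEnd ℂ) (B k i) * B k j) * v j‖ := by
        congr 1
        apply Finset.sum_congr rfl; intro i _
        apply Finset.sum_congr rfl; intro j _
        rw [← hpoint i j]
    _ ≤ specNorm c * ‖u‖ * ‖v‖ := core_gram c B hdiagB u v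

lemma Sbound (c : Matrix (Fin M) (Fin M) ℂ) (hc : c.PosSemidef) (hdiag : ∀ i, c i i = 1)
    (jj m : ℕ) (hm : 1 ≤ m) (hjj : jj ≤ m) (u v : EuclideanSpace ℂ (Fin M)) :
    ‖∑ i, ∑ j, (starRingEnd ℂ) (u i) *
        ((c i j)^jj * ((starRingEnd ℂ) (c i j))^(m - jj)) * v j‖
      ≤ specNorm c * ‖u‖ * ‖v‖ := by
  cases jj with
  | succ p => exact Sbound_aux c hc hdiag p (m - (p+1)) u v
  | zero =>
      -- use the conjugate trick
      obtain ⟨q, hq⟩ : ∃ q, m = q + 1 := ⟨m - 1, by omega⟩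
      subst hq
      have key : (∑ i, ∑ j, (starRingEnd ℂ) (u i) *
            ((c i j)^0 * ((starRingEnd ℂ) (c i j))^(q+1-0)) * v j)
          = (starRingEnd ℂ) (∑ i, ∑ j, (starRingEnd ℂ) (cvec u i) *
            ((c i j)^(q+1) * ((starRingEnd ℂ) (c i j))^0) * cvec v j) := by
        rw [map_sum]
        apply Finset.sum_congr rfl; intro i _
        rw [map_sum]
        apply Finset.sum_congr rfl; intro j _
        simp only [cvec, _root_.map_mul, map_pow, RingHom.id_apply, Complex.conj_conj]
        rw [show q + 1 - 0 = q + 1 from rfl, pow_succ, pow_zero]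
        ring
      rw [key, Complex.norm_conj]
      calc _ ≤ specNorm c * ‖cvec u‖ * ‖cvec v‖ := Sbound_aux c hc hdiag q 0 (cvec u) (cvec v)
        _ = specNorm c * ‖u‖ * ‖v‖ := by rw [norm_cvec, norm_cvec]

lemma expand_bound (c : Matrix (Fin M) (Fin M) ℂ) (hc : c.PosSemidef) (hdiag : ∀ i, c i i = 1)
    (m : ℕ) (hm : 1 ≤ m) (w : ℕ → ℂ) (u v : EuclideanSpace ℂ (Fin M)) :
    ‖∑ i, ∑ j, (starRingEnd ℂ) (u i) *
        (∑ jj ∈ Finset.range (m+1), w jj * ((c i j)^jj * ((starRingEnd ℂ) (c i j))^(m-jj))) * v j‖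
      ≤ (∑ jj ∈ Finset.range (m+1), ‖w jj‖) * (specNorm c * ‖u‖ * ‖v‖) := by
  have hswap : (∑ i, ∑ j, (starRingEnd ℂ) (u i) *
        (∑ jj ∈ Finset.range (m+1), w jj * ((c i j)^jj * ((starRingEnd ℂ) (c i j))^(m-jj))) * v j)
      = ∑ jj ∈ Finset.range (m+1), w jj * (∑ i, ∑ j, (starRingEnd ℂ) (u i) *
          ((c i j)^jj * ((starRingEnd ℂ) (c i j))^(m-jj)) * v j) := by
    calc _ = ∑ i, ∑ jj ∈ Finset.range (m+1), ∑ j, w jj * ((starRingEnd ℂ) (u i) *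
          ((c i j)^jj * ((starRingEnd ℂ) (c i j))^(m-jj)) * v j) := by
          apply Finset.sum_congr rfl; intro i _
          rw [Finset.sum_comm]
          apply Finset.sum_congr rfl; intro j _
          rw [Finset.mul_sum, Finset.sum_mul]
          apply Finset.sum_congr rfl; intro jj _
          ring
      _ = ∑ jj ∈ Finset.range (m+1), ∑ i, ∑ j, w jj * ((starRingEnd ℂ) (u i) *
          ((c i j)^jj * ((starRingEnd ℂ) (c i j))^(m-jj)) * v j) := Finset.sum_comm
      _ = _ := by
          apply Finset.sum_congr rfl; intro jj _
          rw [Finset.mul_sum]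
          apply Finset.sum_congr rfl; intro i _
          rw [Finset.mul_sum]
  rw [hswap]
  calc ‖∑ jj ∈ Finset.range (m+1), w jj * (∑ i, ∑ j, (starRingEnd ℂ) (u i) *
          ((c i j)^jj * ((starRingEnd ℂ) (c i j))^(m-jj)) * v j)‖
      ≤ ∑ jj ∈ Finset.range (m+1), ‖w jj * (∑ i, ∑ j, (starRingEnd ℂ) (u i) *
          ((c i j)^jj * ((starRingEnd ℂ) (c i j))^(m-jj)) * v j)‖ := by
        simpa using norm_sum_le (Finset.range (m+1))
          (fun jj => w jj * (∑ i, ∑ j, (starRingEnd ℂ) (u i) *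
            ((c i j)^jj * ((starRingEnd ℂ) (c i j))^(m-jj)) * v j))
    _ ≤ ∑ jj ∈ Finset.range (m+1), ‖w jj‖ * (specNorm c * ‖u‖ * ‖v‖) := by
        apply Finset.sum_le_sum
        intro jj hjj
        rw [norm_mul]
        apply mul_le_mul_of_nonneg_left _ (norm_nonneg _)
        have hjjm : jj ≤ m := by
          have := Finset.mem_range.mp hjj; omega
        calc _ ≤ specNorm c * ‖u‖ * ‖v‖ := Sbound c hc hdiag jj m hm hjjm u v
          _ = _ := by ring
    _ = _ := by rw [← Finset.sum_mul]

def wR (m jj : ℕ) : ℂ := ((m.choose jj : ℂ))/2^m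
def wI (m jj : ℕ) : ℂ := Complex.I * (-1)^(m-jj) * ((m.choose jj : ℂ)) / (2*Complex.I)^m

lemma re_pow_expand (z : ℂ) (m : ℕ) :
    ((z.re : ℂ))^m = ∑ jj ∈ Finset.range (m+1), wR m jj * (z^jj * ((starRingEnd ℂ) z)^(m-jj)) := by
  have h1 : ((z.re : ℂ)) = (z + (starRingEnd ℂ) z)/2 := by
    rw [Complex.add_conj]
    push_cast
    ring
  rw [h1, div_pow, add_pow, Finset.sum_div]
  apply Finset.sum_congr rfl
  intro jj _
  unfold wR
  ring

lemma im_pow_expand (z : ℂ) (m : ℕ) :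
    Complex.I * ((z.im : ℂ))^m
      = ∑ jj ∈ Finset.range (m+1), wI m jj * (z^jj * ((starRingEnd ℂ) z)^(m-jj)) := by
  have h1 : ((z.im : ℂ)) = (z - (starRingEnd ℂ) z)/(2*Complex.I) := by
    rw [Complex.sub_conj]
    field_simp [Complex.I_ne_zero]
    push_cast
    ring
  have h2 : z - (starRingEnd ℂ) z = z + (-(starRingEnd ℂ) z) := by ring
  rw [h1, div_pow, h2, add_pow, Finset.sum_div, Finset.mul_sum]
  apply Finset.sum_congr rfl
  intro jj _
  rw [neg_pow]
  unfold wI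
  ring

lemma sum_abs_wR (m : ℕ) : ∑ jj ∈ Finset.range (m+1), ‖wR m jj‖ = 1 := by
  have h : ∀ jj, ‖wR m jj‖ = (m.choose jj : ℝ)/2^m := by
    intro jj
    unfold wR
    rw [norm_div, norm_pow]
    simp [Complex.norm_natCast]
  rw [Finset.sum_congr rfl (fun jj _ => h jj), ← Finset.sum_div]
  rw [← Nat.cast_sum, Nat.sum_range_choose]
  rw [div_eq_one_iff_eq (by positivity)]
  push_cast
  ring

lemma sum_abs_wI (m : ℕ) : ∑ jj ∈ Finset.range (m+1), ‖wI m jj‖ = 1 := by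
  have h : ∀ jj, ‖wI m jj‖ = (m.choose jj : ℝ)/2^m := by
    intro jj
    unfold wI
    rw [norm_div, norm_pow, norm_mul, norm_mul,
      norm_pow]
    simp [Complex.norm_natCast, Complex.norm_I]
  rw [Finset.sum_congr rfl (fun jj _ => h jj), ← Finset.sum_div]
  rw [← Nat.cast_sum, Nat.sum_range_choose]
  rw [div_eq_one_iff_eq (by positivity)]
  push_cast
  ring

lemma Tbound (c : Matrix (Fin M) (Fin M) ℂ) (hc : c.PosSemidef) (hdiag : ∀ i, c i i = 1)
    (m : ℕ) (hm : 1 ≤ m) (u v : EuclideanSpace ℂ (Fin M)) :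
    ‖∑ i, ∑ j, (starRingEnd ℂ) (u i) *
        ((((c i j).re : ℂ))^m + Complex.I * (((c i j).im : ℂ))^m) * v j‖
      ≤ 2 * (specNorm c * ‖u‖ * ‖v‖) := by
  have hsplit : (∑ i, ∑ j, (starRingEnd ℂ) (u i) *
        ((((c i j).re : ℂ))^m + Complex.I * (((c i j).im : ℂ))^m) * v j)
      = (∑ i, ∑ j, (starRingEnd ℂ) (u i) *
          (∑ jj ∈ Finset.range (m+1), wR m jj * ((c i j)^jj * ((starRingEnd ℂ) (c i j))^(m-jj))) * v j)
      + (∑ i, ∑ j, (starRingEnd ℂ) (u i) *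
          (∑ jj ∈ Finset.range (m+1), wI m jj * ((c i j)^jj * ((starRingEnd ℂ) (c i j))^(m-jj))) * v j) := by
    rw [← Finset.sum_add_distrib]
    apply Finset.sum_congr rfl; intro i _
    rw [← Finset.sum_add_distrib]
    apply Finset.sum_congr rfl; intro j _
    rw [← re_pow_expand, ← im_pow_expand]
    ring
  rw [hsplit]
  calc ‖_‖
      ≤ ‖∑ i, ∑ j, (starRingEnd ℂ) (u i) *
          (∑ jj ∈ Finset.range (m+1), wR m jj * ((c i j)^jj * ((starRingEnd ℂ) (c i j))^(m-jj))) * v j‖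
        + ‖∑ i, ∑ j, (starRingEnd ℂ) (u i) *
          (∑ jj ∈ Finset.range (m+1), wI m jj * ((c i j)^jj * ((starRingEnd ℂ) (c i j))^(m-jj))) * v j‖ :=
        norm_add_le _ _
    _ ≤ 1 * (specNorm c * ‖u‖ * ‖v‖) + 1 * (specNorm c * ‖u‖ * ‖v‖) := by
        apply add_le_add
        · rw [← sum_abs_wR m]
          exact expand_bound c hc hdiag m hm (wR m) u v
        · rw [← sum_abs_wI m]
          exact expand_bound c hc hdiag m hm (wI m) u v
    _ = 2 * (specNorm c * ‖u‖ * ‖v‖) := by ring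


end MatrixAux

/-- if C is Hermitian PSD with min_i [C]_{ii} ≥ α > 0, then
‖P_arcsine(C)‖ ≤ (2/α)·‖C‖ in spectral norm. -/

theorem stmt7 {M : ℕ} (α : ℝ) (hα : 0 < α) (C : Matrix (Fin M) (Fin M) ℂ)
    (hC : C.PosSemidef) (hdiag : ∀ i, α ≤ (C i i).re) :
    specNorm (arcsineMap C) ≤ (2 / α) * specNorm C := by
  classical
  set d : Fin M → ℝ := fun i => Real.sqrt ((C i i).re) with hd
  have hCiire : ∀ i, 0 < (C i i).re := fun i => lt_of_lt_of_le hα (hdiag i)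
  have hdpos : ∀ i, 0 < d i := fun i => Real.sqrt_pos.mpr (hCiire i)
  have hdsq : ∀ i, d i * d i = (C i i).re := fun i => Real.mul_self_sqrt (hCiire i).le
  set c : Matrix (Fin M) (Fin M) ℂ :=
    Matrix.of (fun i j => (((d i * d j : ℝ) : ℂ))⁻¹ * C i j) with hcdef
  have hcapply : ∀ i j, c i j = (((d i * d j : ℝ) : ℂ))⁻¹ * C i j := fun i j => rfl
  -- c is PSD
  have hcPSD : c.PosSemidef := by
    have h := hC.conjTranspose_mul_mul_same
      (B := Matrix.diagonal (fun i => (((d i)⁻¹ : ℝ) : ℂ)))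
    have heq : c = (Matrix.diagonal (fun i => (((d i)⁻¹ : ℝ) : ℂ)))ᴴ * C
        * Matrix.diagonal (fun i => (((d i)⁻¹ : ℝ) : ℂ)) := by
      rw [Matrix.diagonal_conjTranspose]
      ext i j
      rw [Matrix.mul_diagonal, Matrix.diagonal_mul, hcapply i j]
      simp only [Pi.star_apply, Complex.star_def, Complex.conj_ofReal]
      push_cast
      rw [mul_inv]
      ring
    rw [heq]
    exact h
  -- diagonal of c is 1
  have hcdiag : ∀ i, c i i = 1 := by
    intro i
    rw [hcapply i i]
    have hCii : C i i = ((C i i).re : ℂ) := (hC.1.coe_re_apply_self i).symm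
    rw [hCii, hdsq i]
    rw [inv_mul_eq_div, div_eq_one_iff_eq]
    exact_mod_cast (hCiire i).ne'
  -- entries of c are bounded by 1
  have habs : ∀ i j, ‖c i j‖ ≤ 1 := by
    intro i j
    obtain ⟨S, hSH, hSS⟩ := psd_sqrt_aux c hcPSD
    set col : Fin M → EuclideanSpace ℂ (Fin M) := fun i => WithLp.toLp 2 (fun k => S k i) with hcol
    have hinner : ∀ i j, (inner ℂ (col i) (col j) : ℂ) = c i j := by
      intro i j
      rw [PiLp.inner_apply]
      rw [← hSS, Matrix.mul_apply]
      apply Finset.sum_congr rfl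
      intro k _
      rw [RCLike.inner_apply, mul_comm]
      congr 1
      conv_rhs => rw [← hSH]
      simp [Matrix.conjTranspose_apply, hcol]
    have hnorm : ∀ i, ‖col i‖ = 1 := by
      intro i
      have h1 : (inner ℂ (col i) (col i) : ℂ) = ((‖col i‖ : ℂ))^2 :=
        inner_self_eq_norm_sq_to_K (𝕜 := ℂ) (col i)
      rw [hinner i i, hcdiag i] at h1
      have h2 : (‖col i‖ : ℝ)^2 = 1 := by exact_mod_cast h1.symm
      nlinarith [norm_nonneg (col i)]
    calc ‖c i j‖ = ‖(inner ℂ (col i) (col j) : ℂ)‖ := by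
          rw [hinner i j]
      _ ≤ ‖col i‖ * ‖col j‖ := norm_inner_le_norm _ _
      _ = 1 := by rw [hnorm i, hnorm j, mul_one]
  have hre1 : ∀ i j, |(c i j).re| ≤ 1 :=
    fun i j => le_trans (Complex.abs_re_le_norm _) (habs i j)
  have him1 : ∀ i j, |(c i j).im| ≤ 1 :=
    fun i j => le_trans (Complex.abs_im_le_norm _) (habs i j)
  -- norm comparison specNorm c ≤ specNorm C / α
  have hsqa : Real.sqrt α * Real.sqrt α = α := Real.mul_self_sqrt hα.le
  have hsa : 0 < Real.sqrt α := Real.sqrt_pos.mpr hα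
  have hda : ∀ i, Real.sqrt α ≤ d i := fun i => Real.sqrt_le_sqrt (hdiag i)
  have hscale : ∀ u w : EuclideanSpace ℂ (Fin M),
      (∀ i, w i = (((d i)⁻¹ : ℝ) : ℂ) * u i) → ‖w‖ ≤ (Real.sqrt α)⁻¹ * ‖u‖ := by
    intro u w hw
    rw [EuclideanSpace.norm_eq, EuclideanSpace.norm_eq]
    have hstep : ∑ i, ‖w i‖^2
        ≤ ((Real.sqrt α)⁻¹)^2 * ∑ i, ‖u i‖^2 := by
      rw [Finset.mul_sum]
      apply Finset.sum_le_sum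
      intro i _
      rw [hw i, norm_mul]
      have h1 : ‖(((d i)⁻¹ : ℝ) : ℂ)‖ = (d i)⁻¹ := by
        rw [Complex.norm_real, Real.norm_eq_abs, abs_of_pos (inv_pos.mpr (hdpos i))]
      rw [h1, mul_pow]
      apply mul_le_mul_of_nonneg_right _ (sq_nonneg _)
      rw [sq, sq]
      have hinv : (d i)⁻¹ ≤ (Real.sqrt α)⁻¹ := inv_anti₀ hsa (hda i)
      apply mul_le_mul hinv hinv (by positivity) (by positivity)
    calc Real.sqrt (∑ i, ‖w i‖^2)
        ≤ Real.sqrt (((Real.sqrt α)⁻¹)^2 * ∑ i, ‖u i‖^2) := Real.sqrt_le_sqrt hstep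
      _ = (Real.sqrt α)⁻¹ * Real.sqrt (∑ i, ‖u i‖^2) := by
          rw [Real.sqrt_mul (sq_nonneg _), Real.sqrt_sq (by positivity)]
  have hcnorm : specNorm c ≤ specNorm C / α := by
    apply specNorm_le_of_bil c (specNorm C / α) (div_nonneg (norm_nonneg _) hα.le)
    intro u v
    set u' : EuclideanSpace ℂ (Fin M) := WithLp.toLp 2 (fun i => (((d i)⁻¹ : ℝ) : ℂ) * u i) with hu'
    set v' : EuclideanSpace ℂ (Fin M) := WithLp.toLp 2 (fun i => (((d i)⁻¹ : ℝ) : ℂ) * v i) with hv'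
    have hbileq : bil c u v = bil C u' v' := by
      unfold bil
      apply Finset.sum_congr rfl; intro i _
      apply Finset.sum_congr rfl; intro j _
      rw [hcapply i j]
      simp only [hu', hv', _root_.map_mul, Complex.conj_ofReal]
      push_cast
      rw [mul_inv]
      ring
    rw [hbileq]
    calc ‖bil C u' v'‖ ≤ specNorm C * ‖u'‖ * ‖v'‖ := abs_bil_le C u' v'
      _ ≤ specNorm C * ((Real.sqrt α)⁻¹ * ‖u‖) * ((Real.sqrt α)⁻¹ * ‖v‖) := by
          apply mul_le_mul
          · exact mul_le_mul_of_nonneg_left (hscale u u' (fun i => rfl)) (norm_nonneg _)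
          · exact hscale v v' (fun i => rfl)
          · exact norm_nonneg _
          · have hCn : (0:ℝ) ≤ specNorm C := norm_nonneg _
            exact mul_nonneg hCn (by positivity)
      _ = specNorm C / α * ‖u‖ * ‖v‖ := by
          have h2 : (Real.sqrt α)⁻¹ * (Real.sqrt α)⁻¹ = α⁻¹ := by
            rw [← mul_inv, hsqa]
          rw [div_eq_mul_inv, ← h2]
          ring
  -- main bound : specNorm (arcsineMap C) ≤ 2 * specNorm c
  have hmain : specNorm (arcsineMap C) ≤ 2 * specNorm c := by
    apply specNorm_le_of_bil _ _ (mul_nonneg (by norm_num) (norm_nonneg _))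
    intro u v
    -- entrywise HasSum
    have hentry : ∀ i j, HasSum
        (fun k : ℕ => ((2 / Real.pi : ℝ) : ℂ) * ((aa k : ℂ) *
          ((((c i j).re : ℂ))^(2*k+1) + Complex.I * (((c i j).im : ℂ))^(2*k+1))))
        (arcsineMap C i j) := by
      intro i j
      have hre := hasSum_arcsin (hre1 i j)
      have him := hasSum_arcsin (him1 i j)
      have hreC : HasSum (fun k : ℕ => ((aa k : ℂ)) * (((c i j).re : ℂ))^(2*k+1))
          ((Real.arcsin ((c i j).re) : ℂ)) := by
        have h := Complex.hasSum_ofReal.mpr hre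
        apply h.congr_fun
        intro k
        push_cast
        ring
      have himC : HasSum (fun k : ℕ => Complex.I * (((aa k : ℂ)) * (((c i j).im : ℂ))^(2*k+1)))
          (Complex.I * ((Real.arcsin ((c i j).im) : ℂ))) := by
        have h := (Complex.hasSum_ofReal.mpr him).mul_left Complex.I
        apply h.congr_fun
        intro k
        push_cast
        ring
      have hsum := (hreC.add himC).mul_left ((2 / Real.pi : ℝ) : ℂ)
      have htarget : arcsineMap C i j = ((2 / Real.pi : ℝ) : ℂ) *
          ((Real.arcsin ((c i j).re) : ℂ) + Complex.I * ((Real.arcsin ((c i j).im) : ℂ))) := by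
        show arcsineMap C i j = _
        unfold arcsineMap
        rw [Matrix.of_apply]
        have e1 : (C i j).re / (Real.sqrt (C i i).re * Real.sqrt (C j j).re) = (c i j).re := by
          rw [show Real.sqrt (C i i).re = d i from rfl, show Real.sqrt (C j j).re = d j from rfl]
          rw [hcapply i j]
          rw [show (((d i * d j : ℝ)):ℂ)⁻¹ = (((d i * d j : ℝ)⁻¹ : ℝ) : ℂ) by push_cast; ring]
          rw [Complex.re_ofReal_mul]
          rw [div_eq_inv_mul]
        have e2 : (C i j).im / (Real.sqrt (C i i).re * Real.sqrt (C j j).re) = (c i j).im := by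
          rw [show Real.sqrt (C i i).re = d i from rfl, show Real.sqrt (C j j).re = d j from rfl]
          rw [hcapply i j]
          rw [show (((d i * d j : ℝ)):ℂ)⁻¹ = (((d i * d j : ℝ)⁻¹ : ℝ) : ℂ) by push_cast; ring]
          rw [Complex.im_ofReal_mul]
          rw [div_eq_inv_mul]
        rw [e1, e2]
      rw [htarget]
      apply hsum.congr_fun
      intro k
      ring
    -- sum over i j
    have hbil : HasSum (fun k : ℕ => ∑ i, ∑ j, (starRingEnd ℂ) (u i) *
        (((2 / Real.pi : ℝ) : ℂ) * ((aa k : ℂ) *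
          ((((c i j).re : ℂ))^(2*k+1) + Complex.I * (((c i j).im : ℂ))^(2*k+1)))) * v j)
        (bil (arcsineMap C) u v) := by
      unfold bil
      apply hasSum_sum
      intro i _
      apply hasSum_sum
      intro j _
      exact ((hentry i j).mul_left ((starRingEnd ℂ) (u i))).mul_right (v j)
    -- bound each term
    have hKc : (0:ℝ) ≤ specNorm c * ‖u‖ * ‖v‖ :=
      mul_nonneg (mul_nonneg (norm_nonneg _) (norm_nonneg _)) (norm_nonneg _)
    have hterm : ∀ k : ℕ, ‖(∑ i, ∑ j, (starRingEnd ℂ) (u i) *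
        (((2 / Real.pi : ℝ) : ℂ) * ((aa k : ℂ) *
          ((((c i j).re : ℂ))^(2*k+1) + Complex.I * (((c i j).im : ℂ))^(2*k+1)))) * v j)‖
        ≤ aa k * ((2 / Real.pi) * (2 * (specNorm c * ‖u‖ * ‖v‖))) := by
      intro k
      have hfact : (∑ i, ∑ j, (starRingEnd ℂ) (u i) *
          (((2 / Real.pi : ℝ) : ℂ) * ((aa k : ℂ) *
            ((((c i j).re : ℂ))^(2*k+1) + Complex.I * (((c i j).im : ℂ))^(2*k+1)))) * v j)
          = ((2 / Real.pi : ℝ) : ℂ) * ((aa k : ℂ) *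
            (∑ i, ∑ j, (starRingEnd ℂ) (u i) *
              ((((c i j).re : ℂ))^(2*k+1) + Complex.I * (((c i j).im : ℂ))^(2*k+1)) * v j)) := by
        rw [Finset.mul_sum, Finset.mul_sum]
        apply Finset.sum_congr rfl; intro i _
        rw [Finset.mul_sum, Finset.mul_sum]
        apply Finset.sum_congr rfl; intro j _
        ring
      rw [hfact]
      rw [norm_mul, norm_mul]
      have h2pi : ‖((2 / Real.pi : ℝ) : ℂ)‖ = 2 / Real.pi := by
        rw [Complex.norm_real, Real.norm_eq_abs, abs_of_pos (by positivity)]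
      have haak : ‖(aa k : ℂ)‖ = aa k := by
        rw [Complex.norm_real, Real.norm_eq_abs, abs_of_nonneg (aa_nonneg k)]
      rw [h2pi, haak]
      have hm : 1 ≤ 2*k+1 := by omega
      have := Tbound c hcPSD hcdiag (2*k+1) hm u v
      calc 2 / Real.pi * (aa k * ‖∑ i, ∑ j, (starRingEnd ℂ) (u i) *
            ((((c i j).re : ℂ))^(2*k+1) + Complex.I * (((c i j).im : ℂ))^(2*k+1)) * v j‖)
          ≤ 2 / Real.pi * (aa k * (2 * (specNorm c * ‖u‖ * ‖v‖))) := by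
            apply mul_le_mul_of_nonneg_left _ (by positivity)
            exact mul_le_mul_of_nonneg_left this (aa_nonneg k)
        _ = aa k * ((2 / Real.pi) * (2 * (specNorm c * ‖u‖ * ‖v‖))) := by ring
    -- summability of the bound
    have hgsum : HasSum (fun k : ℕ => aa k * ((2 / Real.pi) * (2 * (specNorm c * ‖u‖ * ‖v‖))))
        ((Real.pi/2) * ((2 / Real.pi) * (2 * (specNorm c * ‖u‖ * ‖v‖)))) :=
      hasSum_aa_pi.mul_right _
    have hnormsum : ‖bil (arcsineMap C) u v‖
        ≤ (Real.pi/2) * ((2 / Real.pi) * (2 * (specNorm c * ‖u‖ * ‖v‖))) := by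
      rw [← hbil.tsum_eq]
      have hsummable : Summable (fun k : ℕ => ∑ i, ∑ j, (starRingEnd ℂ) (u i) *
          (((2 / Real.pi : ℝ) : ℂ) * ((aa k : ℂ) *
            ((((c i j).re : ℂ))^(2*k+1) + Complex.I * (((c i j).im : ℂ))^(2*k+1)))) * v j) :=
        hbil.summable
      calc ‖∑' k, _‖ ≤ ∑' (k:ℕ), ‖(∑ i, ∑ j, (starRingEnd ℂ) (u i) *
            (((2 / Real.pi : ℝ) : ℂ) * ((aa k : ℂ) *
              ((((c i j).re : ℂ))^(2*k+1) + Complex.I * (((c i j).im : ℂ))^(2*k+1)))) * v j)‖ :=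
            norm_tsum_le_tsum_norm (by
              apply Summable.of_nonneg_of_le (fun k => norm_nonneg _) hterm
              exact hgsum.summable)
        _ ≤ ∑' k, aa k * ((2 / Real.pi) * (2 * (specNorm c * ‖u‖ * ‖v‖))) := by
            apply Summable.tsum_le_tsum hterm
            · apply Summable.of_nonneg_of_le (fun k => norm_nonneg _) hterm
              exact hgsum.summable
            · exact hgsum.summable
        _ = (Real.pi/2) * ((2 / Real.pi) * (2 * (specNorm c * ‖u‖ * ‖v‖))) := hgsum.tsum_eq
    calc ‖bil (arcsineMap C) u v‖ = ‖bil (arcsineMap C) u v‖ :=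
          rfl
      _ ≤ (Real.pi/2) * ((2 / Real.pi) * (2 * (specNorm c * ‖u‖ * ‖v‖))) := hnormsum
      _ = 2 * specNorm c * ‖u‖ * ‖v‖ := by
          field_simp
  calc specNorm (arcsineMap C) ≤ 2 * specNorm c := hmain
    _ ≤ 2 * (specNorm C / α) := by
        apply mul_le_mul_of_nonneg_left hcnorm (by norm_num)
    _ = (2 / α) * specNorm C := by ring


end
end

section
/- Let α > 0, ε_∞ ≤ α/2, and let C, Ĉ ∈ ℂ^{M×M} be Hermitian matrices such that min_i [C]_{i,i} ≥ α and ‖Ĉ − C‖_∞ ≤ ε_∞. Then min_i [Ĉ]_{i,i} ≥ α/2, and the matrices A = √(2/π)·diag(C)^{−1/2} and Â = √(2/π)·diag(Ĉ)^{−1/2} satisfy ‖A − Â‖ ≤ (4/π)·α^{−3/2}·ε_∞, where ‖·‖ is the spectral (operator) norm. -/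
open MeasureTheory ProbabilityTheory Matrix
open scoped ComplexOrder

noncomputable section

/-- every entry modulus is bounded by maxNorm. -/
lemma le_maxNorm' {M : ℕ} (A : Matrix (Fin M) (Fin M) ℂ) (i j : Fin M) :
    ‖A i j‖ ≤ maxNorm A :=
  le_trans (le_ciSup (f := fun j => ‖A i j‖) (Set.Finite.bddAbove (Set.finite_range _)) j)
    (le_ciSup (f := fun i => ⨆ j, ‖A i j‖) (Set.Finite.bddAbove (Set.finite_range _)) i)

lemma maxNorm_nonneg' {M : ℕ} (A : Matrix (Fin M) (Fin M) ℂ) : 0 ≤ maxNorm A :=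
  Real.iSup_nonneg fun i => Real.iSup_nonneg fun j => norm_nonneg _

lemma specDiag' {M : ℕ} (d : Fin M → ℂ) (c : ℝ) (hc : 0 ≤ c) (h : ∀ i, ‖d i‖ ≤ c) :
    specNorm (Matrix.diagonal d) ≤ c := by
  apply ContinuousLinearMap.opNorm_le_bound _ hc
  intro x
  have hx : ∀ i, (Matrix.toEuclideanCLM (𝕜 := ℂ) (n := Fin M) (Matrix.diagonal d) x) i
      = d i * x i := by
    intro i
    have h2 := congrFun (Matrix.ofLp_toEuclideanCLM (𝕜 := ℂ) (Matrix.diagonal d) x) i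
    simpa [Matrix.mulVec_diagonal] using h2
  rw [EuclideanSpace.norm_eq, EuclideanSpace.norm_eq]
  rw [← Real.sqrt_sq hc, ← Real.sqrt_mul (by positivity)]
  apply Real.sqrt_le_sqrt
  rw [Finset.mul_sum]
  apply Finset.sum_le_sum
  intro i _
  rw [hx, norm_mul, mul_pow]
  exact mul_le_mul_of_nonneg_right (pow_le_pow_left₀ (norm_nonneg _) (h i) 2) (by positivity)

lemma keyIneq' (α ε a b : ℝ) (hα : 0 < α) (ha : α ≤ a) (hb : α/2 ≤ b) (hab : |a - b| ≤ ε) :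
    Real.sqrt (2/Real.pi) * |(Real.sqrt a)⁻¹ - (Real.sqrt b)⁻¹| ≤
      (4 / Real.pi) * α ^ ((-3 : ℝ)/2) * ε := by
  have hπ := Real.pi_pos
  have ha0 : 0 < a := hα.trans_le ha
  have hb0 : 0 < b := (by linarith : (0:ℝ) < α/2).trans_le hb
  set sa := Real.sqrt a with hsa_def
  set sb := Real.sqrt b with hsb_def
  have hsa : 0 < sa := Real.sqrt_pos.2 ha0
  have hsb : 0 < sb := Real.sqrt_pos.2 hb0
  have hsaα : Real.sqrt α ≤ sa := Real.sqrt_le_sqrt ha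
  have hsbα : Real.sqrt (α/2) ≤ sb := Real.sqrt_le_sqrt hb
  have hsα : 0 < Real.sqrt α := Real.sqrt_pos.2 hα
  have hsα2 : 0 < Real.sqrt (α/2) := Real.sqrt_pos.2 (by linarith)
  have hε : 0 ≤ ε := le_trans (abs_nonneg _) hab
  have hrpow : α ^ ((-3 : ℝ)/2) = (α * Real.sqrt α)⁻¹ := by
    rw [show ((-3:ℝ)/2) = -(1 + 1/2) by ring, Real.rpow_neg hα.le, Real.rpow_add hα,
      Real.rpow_one, ← Real.sqrt_eq_rpow]
  have h1 : (sa - sb) * (sa + sb) = a - b := by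
    have h2 : sa^2 = a := Real.sq_sqrt ha0.le
    have h3 : sb^2 = b := Real.sq_sqrt hb0.le
    linear_combination h2 - h3
  have h4 : |sa - sb| ≤ ε / Real.sqrt α := by
    rw [le_div_iff₀ hsα]
    calc |sa - sb| * Real.sqrt α ≤ |sa - sb| * (sa + sb) := by
          apply mul_le_mul_of_nonneg_left (by linarith) (abs_nonneg _)
      _ = |a - b| := by rw [← abs_of_pos (show 0 < sa + sb by linarith), ← abs_mul, h1]
      _ ≤ ε := hab
  have h5 : |sa⁻¹ - sb⁻¹| = |sa - sb| / (sa * sb) := by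
    have h6 : sa⁻¹ - sb⁻¹ = (sb - sa) / (sa * sb) := by field_simp
    rw [h6, abs_div, abs_of_pos (mul_pos hsa hsb), abs_sub_comm]
  have h7 : |sa⁻¹ - sb⁻¹| ≤ ε / Real.sqrt α / (Real.sqrt α * Real.sqrt (α/2)) := by
    rw [h5]
    exact div_le_div₀ (by positivity) h4 (by positivity)
      (mul_le_mul hsaα hsbα hsα2.le hsa.le)
  have h8 : Real.sqrt (α/2) = Real.sqrt α / Real.sqrt 2 := Real.sqrt_div hα.le 2
  have hαα : Real.sqrt α * Real.sqrt α = α := Real.mul_self_sqrt hα.le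
  have h2pos : (0:ℝ) < Real.sqrt 2 := by positivity
  have h9 : ε / Real.sqrt α / (Real.sqrt α * Real.sqrt (α/2)) =
      Real.sqrt 2 * (ε * (α * Real.sqrt α)⁻¹) := by
    rw [h8]
    field_simp
    ring_nf; rw [Real.sq_sqrt hα.le]
  have hconst : Real.sqrt (2/Real.pi) * Real.sqrt 2 ≤ 4 / Real.pi := by
    rw [← Real.sqrt_mul (by positivity)]
    have h41 : (1:ℝ) ≤ 4 / Real.pi := by
      rw [le_div_iff₀ hπ]; linarith [Real.pi_le_four]
    have heq : (2 / Real.pi * 2 : ℝ) = 4 / Real.pi := by ring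
    rw [heq]
    have hs := Real.sq_sqrt (show (0:ℝ) ≤ 4 / Real.pi by positivity)
    nlinarith [Real.sqrt_nonneg (4 / Real.pi), sq_nonneg (Real.sqrt (4/Real.pi) - 1)]
  rw [hrpow]
  calc Real.sqrt (2/Real.pi) * |sa⁻¹ - sb⁻¹|
      ≤ Real.sqrt (2/Real.pi) * (Real.sqrt 2 * (ε * (α * Real.sqrt α)⁻¹)) := by
        rw [← h9]; exact mul_le_mul_of_nonneg_left h7 (Real.sqrt_nonneg _)
    _ = (Real.sqrt (2/Real.pi) * Real.sqrt 2) * (ε * (α * Real.sqrt α)⁻¹) := by ring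
    _ ≤ (4 / Real.pi) * (ε * (α * Real.sqrt α)⁻¹) :=
        mul_le_mul_of_nonneg_right hconst (by positivity)
    _ = 4 / Real.pi * (α * Real.sqrt α)⁻¹ * ε := by ring

/-- if min_i [C]_{ii} ≥ α and ‖Chat - C‖_∞ ≤ epsInf ≤ α/2, then
min_i [Chat]_{ii} ≥ α/2 and ‖A - Ahat‖ ≤ (4/π)·α^{-3/2}·epsInf for the Bussgang gains. -/
theorem stmt8 {M : ℕ} (α epsInf : ℝ) (hα : 0 < α) (heps : epsInf ≤ α / 2)
    (C Chat : Matrix (Fin M) (Fin M) ℂ) (hC : C.IsHermitian) (hChat : Chat.IsHermitian)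
    (hdiag : ∀ i, α ≤ (C i i).re) (hclose : maxNorm (Chat - C) ≤ epsInf) :
    (∀ i, α / 2 ≤ (Chat i i).re) ∧
    specNorm (busA C - busA Chat) ≤ (4 / Real.pi) * α ^ ((-3 : ℝ)/2) * epsInf := by
  have hepsNN : 0 ≤ epsInf := le_trans (maxNorm_nonneg' _) hclose
  have hentry : ∀ i, |(Chat i i).re - (C i i).re| ≤ epsInf := by
    intro i
    have h1 : ‖(Chat - C) i i‖ ≤ epsInf := (le_maxNorm' _ i i).trans hclose
    have h2 : |((Chat - C) i i).re| ≤ ‖(Chat - C) i i‖ := Complex.abs_re_le_norm _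
    simpa [Matrix.sub_apply, Complex.sub_re] using h2.trans h1
  have part1 : ∀ i, α / 2 ≤ (Chat i i).re := by
    intro i
    have h3 := abs_le.mp (hentry i)
    have h4 := hdiag i
    linarith [h3.1]
  refine ⟨part1, ?_⟩
  have hdiff : busA C - busA Chat = Matrix.diagonal (fun i =>
      ((Real.sqrt (2/Real.pi) : ℝ) : ℂ) *
        (((Real.sqrt (C i i).re)⁻¹ : ℂ) - ((Real.sqrt (Chat i i).re)⁻¹ : ℂ))) := by
    ext i j
    by_cases h : i = j <;>
      simp [busA, dInvSqrt, Matrix.sub_apply, Matrix.diagonal_apply, h, smul_eq_mul, mul_sub]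
  rw [hdiff]
  apply specDiag' _ _ (mul_nonneg (by positivity) hepsNN)
  intro i
  have hcast : ((Real.sqrt (2/Real.pi) : ℝ) : ℂ) *
      (((Real.sqrt (C i i).re)⁻¹ : ℂ) - ((Real.sqrt (Chat i i).re)⁻¹ : ℂ)) =
      ((Real.sqrt (2/Real.pi) * ((Real.sqrt (C i i).re)⁻¹ - (Real.sqrt (Chat i i).re)⁻¹) : ℝ) : ℂ) := by
    push_cast; ring
  rw [hcast, Complex.norm_real, Real.norm_eq_abs, abs_mul, abs_of_nonneg (Real.sqrt_nonneg _)]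
  exact keyIneq' α epsInf _ _ hα (hdiag i) (part1 i) (by rw [abs_sub_comm]; exact hentry i)

end
end
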